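/- arXiv:2308.08400 — 8 statements merged into one kernel-verified Lean document; each statement's English description precedes it below -/
import Mathlib

section
/- Let X and Y be real Banach spaces and let U : X → Y be a local isometry, i.e. every point x ∈ X has an open neighborhood V such that the restriction of U to V is a distance-preserving map from V onto an open subset of Y. Then U is an isometry: U is bijective and ‖U(x) − U(y)‖ = ‖x − y‖ for all x, y ∈ X. -/
open Set Metric Filter Topology
open scoped NNReal

set_option maxHeartbeats 1000000

section ScottishBook155Aux
set_option linter.unusedSectionVars false
set_option linter.unusedVariables false

/-- Local-to-global Lipschitz estimate on a closed interval. -/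
theorem lipschitzOnWith_of_locally' {E : Type*} [PseudoMetricSpace E]
    {f : ℝ → E} {L : ℝ≥0} {a b : ℝ}
    (h : ∀ t ∈ Icc a b, ∃ δ > 0, ∀ u ∈ Icc a b, ∀ v ∈ Icc a b,
      |u - t| < δ → |v - t| < δ → dist (f u) (f v) ≤ L * dist u v) :
    ∀ s ∈ Icc a b, ∀ t ∈ Icc a b, s ≤ t → dist (f s) (f t) ≤ L * (t - s) := by
  have hcont : ContinuousOn f (Icc a b) := by
    intro t ht
    obtain ⟨δ, hδ, hl⟩ := h t ht
    rw [Metric.continuousWithinAt_iff]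
    intro ε hε
    refine ⟨min δ (ε / (L + 1)), by positivity, fun u hu hud => ?_⟩
    have h1 : |u - t| < δ := lt_of_lt_of_le (by rwa [Real.dist_eq] at hud) (min_le_left _ _)
    have h2 := hl u hu t ht h1 (by simpa using hδ)
    calc dist (f u) (f t) ≤ L * dist u t := h2
      _ ≤ L * (ε / (L + 1)) := by
          have : dist u t < ε / (L + 1) := lt_of_lt_of_le hud (min_le_right _ _)
          exact mul_le_mul_of_nonneg_left this.le L.coe_nonneg
      _ < ε := by
          have hL1 : (0:ℝ) < L + 1 := by positivity
          calc (L : ℝ) * (ε / (L + 1)) < (L + 1) * (ε / (L + 1)) := by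
                apply mul_lt_mul_of_pos_right _ (by positivity)
                exact lt_add_one _
            _ = ε := by field_simp
  intro s hs t ht hst
  set S : Set ℝ := {u | dist (f s) (f u) ≤ L * (u - s)} with hS
  have hsub : Icc s t ⊆ Icc a b := Icc_subset_Icc hs.1 ht.2
  have hclosed : IsClosed (S ∩ Icc s t) := by
    have : S ∩ Icc s t = Icc s t ∩ (fun u => dist (f s) (f u) - L * (u - s)) ⁻¹' Iic 0 := by
      ext u; simp only [mem_inter_iff, mem_setOf_eq, mem_preimage, mem_Iic, hS]
      constructor
      · rintro ⟨h1, h2⟩; exact ⟨h2, by linarith⟩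
      · rintro ⟨h1, h2⟩; exact ⟨by linarith, h1⟩
    rw [this]
    apply ContinuousOn.preimage_isClosed_of_isClosed _ isClosed_Icc isClosed_Iic
    apply ContinuousOn.sub
    · exact (continuous_const.dist continuous_id).comp_continuousOn (hcont.mono hsub)
    · fun_prop
  have hmem : t ∈ S := by
    refine IsClosed.Icc_subset_of_forall_exists_gt hclosed ?_ ?_ ⟨hst, le_rfl⟩
    · simp [hS]
    · rintro x ⟨hxS, hx⟩ y hy
      obtain ⟨δ, hδ, hl⟩ := h x (hsub ⟨hx.1, hx.2.le⟩)
      set z := min (min y (x + δ/2)) t with hz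
      have hxz : x < z := by
        apply lt_min (lt_min hy (by linarith)) hx.2
      have hzt : z ≤ t := min_le_right _ _
      have hzx : |z - x| < δ := by
        have h1 : z ≤ x + δ/2 := le_trans (min_le_left _ _) (min_le_right _ _)
        rw [abs_lt]; constructor <;> [linarith; linarith]
      refine ⟨z, ?_, hxz, le_trans (min_le_left _ _) (min_le_left _ _)⟩
      have hzab : z ∈ Icc a b := hsub ⟨le_trans hx.1 hxz.le, hzt⟩
      have hxab : x ∈ Icc a b := hsub ⟨hx.1, hx.2.le⟩
      have := hl x hxab z hzab (by simpa using hδ) hzx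
      calc dist (f s) (f z) ≤ dist (f s) (f x) + dist (f x) (f z) := dist_triangle _ _ _
        _ ≤ L * (x - s) + L * dist x z := add_le_add hxS this
        _ = L * (x - s) + L * (z - x) := by
            rw [Real.dist_eq, abs_of_nonpos (by linarith)]; ring_nf
        _ = L * (z - s) := by ring
  exact hmem

variable {X Y : Type*} [NormedAddCommGroup X] [NormedSpace ℝ X] [CompleteSpace X]
  [NormedAddCommGroup Y] [NormedSpace ℝ Y] {U : X → Y}

/-- A locally distance preserving map is 1-Lipschitz. -/
theorem U_lip (hP1 : ∀ x : X, ∃ ε > 0, ∀ u v : X,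
    dist u x < ε → dist v x < ε → dist (U u) (U v) = dist u v) :
    LipschitzWith 1 U := by
  apply LipschitzWith.of_dist_le_mul
  intro x y
  set p : ℝ → X := fun t => x + t • (y - x) with hp
  have hpd : ∀ u v : ℝ, dist (p u) (p v) = |u - v| * ‖y - x‖ := by
    intro u v
    simp only [hp, dist_eq_norm]
    rw [show x + u • (y - x) - (x + v • (y - x)) = (u - v) • (y - x) by module]
    rw [norm_smul, Real.norm_eq_abs]
  have key : ∀ t ∈ Icc (0:ℝ) 1, ∃ δ > 0, ∀ u ∈ Icc (0:ℝ) 1, ∀ v ∈ Icc (0:ℝ) 1,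
      |u - t| < δ → |v - t| < δ → dist (U (p u)) (U (p v)) ≤ ‖y - x‖₊ * dist u v := by
    intro t _
    obtain ⟨ε, hε, hl⟩ := hP1 (p t)
    refine ⟨ε / (‖y - x‖ + 1), by positivity, fun u _ v _ hu hv => ?_⟩
    have hb : ∀ w : ℝ, |w - t| < ε / (‖y - x‖ + 1) → dist (p w) (p t) < ε := by
      intro w hw
      rw [hpd]
      calc |w - t| * ‖y - x‖ ≤ |w - t| * (‖y - x‖ + 1) :=
            mul_le_mul_of_nonneg_left (by linarith) (abs_nonneg _)
        _ < ε / (‖y - x‖ + 1) * (‖y - x‖ + 1) := by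
            apply mul_lt_mul_of_pos_right hw (by positivity)
        _ = ε := by field_simp
    rw [hl (p u) (p v) (hb u hu) (hb v hv), hpd]
    rw [coe_nnnorm, Real.dist_eq]
    exact le_of_eq (mul_comm _ _)
  have h01 := lipschitzOnWith_of_locally' key 0 (by constructor <;> norm_num)
    1 (by constructor <;> norm_num) (by norm_num)
  have hp0 : p 0 = x := by simp [hp]
  have hp1 : p 1 = y := by simp [hp]
  rw [hp0, hp1] at h01
  calc dist (U x) (U y) ≤ ‖y - x‖₊ * (1 - 0) := h01
    _ = dist x y := by rw [coe_nnnorm, dist_eq_norm, norm_sub_rev]; ring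
    _ ≤ (1:ℝ≥0) * dist x y := by simp

theorem contOn_dist {α E : Type*} [TopologicalSpace α] [PseudoMetricSpace E] {f g : α → E}
    {s : Set α} (hf : ContinuousOn f s) (hg : ContinuousOn g s) :
    ContinuousOn (fun t => dist (f t) (g t)) s :=
  by have := continuous_dist.comp_continuousOn (hf.prodMk hg); exact this

/-- Uniqueness of lifts through a locally injective map. -/
theorem lift_unique' (hP1 : ∀ x : X, ∃ ε > 0, ∀ u v : X,
      dist u x < ε → dist v x < ε → dist (U u) (U v) = dist u v)
    {a b : ℝ} {η η' : ℝ → X}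
    (hη : ContinuousOn η (Icc a b)) (hη' : ContinuousOn η' (Icc a b))
    (heq : ∀ t ∈ Icc a b, U (η t) = U (η' t)) (h0 : η a = η' a) (hab : a ≤ b) :
    ∀ t ∈ Icc a b, η t = η' t := by
  set S : Set ℝ := {t | η t = η' t} with hS
  have hclosed : IsClosed (S ∩ Icc a b) := by
    have : S ∩ Icc a b = Icc a b ∩ (fun t => dist (η t) (η' t)) ⁻¹' {0} := by
      ext t
      simp only [mem_inter_iff, hS, mem_setOf_eq, mem_preimage, mem_singleton_iff,
        dist_eq_zero, and_comm]
    rw [this]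
    exact ContinuousOn.preimage_isClosed_of_isClosed (contOn_dist hη hη') isClosed_Icc
      isClosed_singleton
  have hsub : Icc a b ⊆ S := by
    refine hclosed.Icc_subset_of_forall_exists_gt (by simpa [hS] using h0) ?_
    rintro x ⟨hxS, hx⟩ y hy
    obtain ⟨ε, hε, hl⟩ := hP1 (η x)
    have hcx := (hη x ⟨hx.1, hx.2.le⟩).tendsto
    have hcx' := (hη' x ⟨hx.1, hx.2.le⟩).tendsto
    have hball : ∀ᶠ τ in 𝓝[Icc a b] x, η τ ∈ ball (η x) ε ∧ η' τ ∈ ball (η x) ε := by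
      have h1 : ∀ᶠ τ in 𝓝[Icc a b] x, η τ ∈ ball (η x) ε :=
        hcx.eventually (isOpen_ball.eventually_mem (mem_ball_self hε))
      have h2 : η' x ∈ ball (η x) ε := by
        have : η' x = η x := hxS.symm
        rw [this]; exact mem_ball_self hε
      have h3 : ∀ᶠ τ in 𝓝[Icc a b] x, η' τ ∈ ball (η x) ε :=
        hcx'.eventually (isOpen_ball.eventually_mem h2)
      exact h1.and h3
    rw [eventually_nhdsWithin_iff, Metric.eventually_nhds_iff] at hball
    obtain ⟨δ, hδ, hb⟩ := hball
    set z := min (min y (x + δ/2)) b with hz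
    have hxz : x < z := lt_min (lt_min hy (by linarith)) hx.2
    have hzb : z ≤ b := min_le_right _ _
    have hzy : z ≤ y := le_trans (min_le_left _ _) (min_le_left _ _)
    have hzd : dist z x < δ := by
      have : z ≤ x + δ/2 := le_trans (min_le_left _ _) (min_le_right _ _)
      rw [Real.dist_eq, abs_of_pos (by linarith)]; linarith
    have hzI : z ∈ Icc a b := ⟨le_trans hx.1 hxz.le, hzb⟩
    have ⟨m1, m2⟩ := hb hzd hzI
    have : dist (η z) (η' z) = 0 := by
      have e := hl (η z) (η' z) (mem_ball.mp m1) (mem_ball.mp m2)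
      rw [heq z hzI] at e
      simpa using e.symm
    exact ⟨z, by simpa [hS] using dist_eq_zero.mp this, hxz, hzy⟩
  exact fun t ht => hsub ht

/-- Uniform isometry radius along a compact set. -/
theorem uniform_radius' (hP1 : ∀ x : X, ∃ ε > 0, ∀ u v : X,
      dist u x < ε → dist v x < ε → dist (U u) (U v) = dist u v)
    {K : Set X} (hK : IsCompact K) :
    ∃ δ > 0, ∀ x ∈ K, ∀ u v : X, dist u x < δ → dist v x < δ →
      dist (U u) (U v) = dist u v := by
  choose ε hε hl using hP1
  obtain ⟨δ, hδ, hcov⟩ := lebesgue_number_lemma_of_metric (c := fun x : X => ball x (ε x))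
    hK (fun x => isOpen_ball) (fun x _ => mem_iUnion.mpr ⟨x, mem_ball_self (hε x)⟩)
  refine ⟨δ, hδ, fun x hx u v hu hv => ?_⟩
  obtain ⟨i, hi⟩ := hcov x hx
  exact hl i u v (hi hu) (hi hv)

/-- Two lifts of uniformly close paths stay at the distance of their images. -/
theorem lift_compare' (hP1 : ∀ x : X, ∃ ε > 0, ∀ u v : X,
      dist u x < ε → dist v x < ε → dist (U u) (U v) = dist u v)
    {γ γ' : ℝ → Y} {η η' : ℝ → X}
    (hηc : ContinuousOn η (Icc 0 1)) (hη'c : ContinuousOn η' (Icc 0 1))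
    (hη : ∀ t ∈ Icc (0:ℝ) 1, U (η t) = γ t) (hη' : ∀ t ∈ Icc (0:ℝ) 1, U (η' t) = γ' t)
    {δ c : ℝ}
    (hr : ∀ t ∈ Icc (0:ℝ) 1, ∀ u v : X, dist u (η t) < δ → dist v (η t) < δ →
      dist (U u) (U v) = dist u v)
    (hc : ∀ t ∈ Icc (0:ℝ) 1, dist (γ t) (γ' t) ≤ c) (hcδ : 2 * c < δ)
    (h0 : η 0 = η' 0) :
    ∀ t ∈ Icc (0:ℝ) 1, dist (η t) (η' t) = dist (γ t) (γ' t) := by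
  have hc0 : 0 ≤ c := le_trans dist_nonneg (hc 0 (by norm_num))
  have hδ0 : 0 < δ := by linarith
  set S : Set ℝ := {t | dist (η t) (η' t) ≤ c} with hS
  have hclosed : IsClosed (S ∩ Icc (0:ℝ) 1) := by
    have : S ∩ Icc (0:ℝ) 1 = Icc (0:ℝ) 1 ∩ (fun t => dist (η t) (η' t)) ⁻¹' Iic c := by
      ext t; simp [hS, and_comm]
    rw [this]
    exact ContinuousOn.preimage_isClosed_of_isClosed (contOn_dist hηc hη'c) isClosed_Icc isClosed_Iic
  have hsub : Icc (0:ℝ) 1 ⊆ S := by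
    refine hclosed.Icc_subset_of_forall_exists_gt (by simp [hS, h0, hc0]) ?_
    rintro x ⟨hxS, hx⟩ y hy
    have hxI : x ∈ Icc (0:ℝ) 1 := ⟨hx.1, hx.2.le⟩
    have hball : ∀ᶠ τ in 𝓝[Icc (0:ℝ) 1] x,
        η τ ∈ ball (η x) (δ/4) ∧ η' τ ∈ ball (η' x) (δ/4) := by
      have h1 : ∀ᶠ τ in 𝓝[Icc (0:ℝ) 1] x, η τ ∈ ball (η x) (δ/4) :=
        (hηc x hxI).tendsto.eventually (isOpen_ball.eventually_mem (mem_ball_self (by linarith)))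
      have h2 : ∀ᶠ τ in 𝓝[Icc (0:ℝ) 1] x, η' τ ∈ ball (η' x) (δ/4) :=
        (hη'c x hxI).tendsto.eventually (isOpen_ball.eventually_mem (mem_ball_self (by linarith)))
      exact h1.and h2
    rw [eventually_nhdsWithin_iff, Metric.eventually_nhds_iff] at hball
    obtain ⟨δ', hδ', hb⟩ := hball
    set z := min (min y (x + δ'/2)) 1 with hz
    have hxz : x < z := lt_min (lt_min hy (by linarith)) hx.2
    have hzI : z ∈ Icc (0:ℝ) 1 := ⟨le_trans hx.1 hxz.le, min_le_right _ _⟩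
    have hzd : dist z x < δ' := by
      have : z ≤ x + δ'/2 := le_trans (min_le_left _ _) (min_le_right _ _)
      rw [Real.dist_eq, abs_of_pos (by linarith)]; linarith
    have ⟨m1, m2⟩ := hb hzd hzI
    have e1 : dist (η z) (η x) < δ := lt_of_lt_of_le (by simpa using m1) (by linarith)
    have e2 : dist (η' z) (η x) < δ := by
      calc dist (η' z) (η x) ≤ dist (η' z) (η' x) + dist (η' x) (η x) := dist_triangle _ _ _
        _ < δ/4 + c := by
            have := mem_ball.mp m2
            rw [dist_comm (η' x) (η x)]
            exact add_lt_add_of_lt_of_le this hxS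
        _ < δ := by linarith
    have : dist (η z) (η' z) = dist (γ z) (γ' z) := by
      rw [← hη z hzI, ← hη' z hzI]
      exact (hr x hxI _ _ e1 e2).symm
    refine ⟨z, ?_, hxz, le_trans (min_le_left _ _) (min_le_left _ _)⟩
    exact mem_setOf_eq ▸ (this ▸ hc z hzI : dist (η z) (η' z) ≤ c)
  intro t ht
  have htS : dist (η t) (η' t) ≤ c := hsub ht
  have hcδ' : c < δ := by linarith
  rw [← hη t ht, ← hη' t ht]
  refine (hr t ht _ _ ?_ ?_).symm
  · simpa using hδ0
  · rw [dist_comm]; exact lt_of_le_of_lt htS hcδ'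

/-- clamp to [0,1] is 1-Lipschitz -/
theorem clamp_lip : LipschitzWith 1 (fun t : ℝ => max 0 (min t 1)) := by
  apply LipschitzWith.of_dist_le_mul
  intro s t
  simp only [Real.dist_eq, NNReal.coe_one, one_mul]
  calc |max 0 (min s 1) - max 0 (min t 1)| = |max (min s 1) 0 - max (min t 1) 0| := by
        rw [max_comm 0 _, max_comm 0 _]
    _ ≤ |min s 1 - min t 1| := abs_max_sub_max_le_abs _ _ _
    _ ≤ max |s - t| |1 - 1| := abs_min_sub_min_le_max _ _ _ _
    _ = |s - t| := by simp

theorem clamp_mem (t : ℝ) : max 0 (min t 1) ∈ Icc (0:ℝ) 1 :=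
  ⟨le_max_left _ _, max_le zero_le_one (min_le_right _ _)⟩

/-- Existence of lifts of Lipschitz paths through a local isometry. -/
theorem lift_exists'
    (hP1 : ∀ x : X, ∃ ε > 0, ∀ u v : X,
      dist u x < ε → dist v x < ε → dist (U u) (U v) = dist u v)
    (hP2 : ∀ x : X, ∃ O : Set Y, IsOpen O ∧ U x ∈ O ∧ ∃ g : Y → X, g (U x) = x ∧
      (∀ y ∈ O, U (g y) = y) ∧ ∀ y ∈ O, ∀ y' ∈ O, dist (g y) (g y') = dist y y')
    (hUc : Continuous U)
    {L : ℝ≥0} {γ : ℝ → Y} (hγ : LipschitzWith L γ) (x0 : X) (h0 : U x0 = γ 0) :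
    ∃ η : ℝ → X, LipschitzWith L η ∧ η 0 = x0 ∧ ∀ t ∈ Icc (0:ℝ) 1, U (η t) = γ t := by
  set S : Set ℝ := {t | t ∈ Icc (0:ℝ) 1 ∧ ∃ η : ℝ → X, LipschitzWith L η ∧ η 0 = x0 ∧
    ∀ τ ∈ Icc 0 t, U (η τ) = γ τ} with hS
  have h0S : (0:ℝ) ∈ S := ⟨⟨le_rfl, zero_le_one⟩, fun _ => x0, LipschitzWith.const' x0, rfl,
    fun τ hτ => by rw [show τ = 0 from le_antisymm hτ.2 hτ.1]; exact h0⟩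
  have hne : S.Nonempty := ⟨0, h0S⟩
  have hbdd : BddAbove S := ⟨1, fun t ht => ht.1.2⟩
  set T := sSup S with hT
  have hT0 : 0 ≤ T := le_csSup hbdd h0S
  have hT1 : T ≤ 1 := csSup_le hne fun t ht => ht.1.2
  obtain ⟨u, humono, hulim, huS⟩ := exists_seq_tendsto_sSup hne hbdd
  choose η hηL hη0 hηlift using fun n => (huS n).2
  have huI : ∀ n, u n ∈ Icc (0:ℝ) 1 := fun n => (huS n).1
  have huT : ∀ n, u n ≤ T := fun n => le_csSup hbdd (huS n)
  have hco : ∀ m n, m ≤ n → ∀ τ ∈ Icc (0:ℝ) (u m), η m τ = η n τ := by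
    intro m n hmn
    refine lift_unique' hP1 ((hηL m).continuous.continuousOn)
      ((hηL n).continuous.continuousOn) ?_ (by rw [hη0 m, hη0 n]) (huI m).1
    intro τ hτ
    rw [hηlift m τ hτ, hηlift n τ ⟨hτ.1, le_trans hτ.2 (humono hmn)⟩]
  -- clamped sequence of lifts
  set κ : ℕ → ℝ → ℝ := fun n τ => max 0 (min τ (u n)) with hκ
  have hκmem : ∀ n τ, κ n τ ∈ Icc (0:ℝ) (u n) := fun n τ =>
    ⟨le_max_left _ _, max_le (huI n).1 (min_le_right _ _)⟩
  have hκlip : ∀ n s t, |κ n s - κ n t| ≤ |s - t| := by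
    intro n s t
    calc |κ n s - κ n t| = |max (min s (u n)) 0 - max (min t (u n)) 0| := by
          rw [hκ]; simp only; rw [max_comm 0 (min s (u n)), max_comm 0 (min t (u n))]
      _ ≤ |min s (u n) - min t (u n)| := abs_max_sub_max_le_abs _ _ _
      _ ≤ max |s - t| |u n - u n| := abs_min_sub_min_le_max _ _ _ _
      _ = |s - t| := by simp
  have hκbd : ∀ m n, m ≤ n → ∀ τ, |κ m τ - κ n τ| ≤ u n - u m := by
    intro m n hmn τ
    have h1 : |κ m τ - κ n τ| = |max (min τ (u m)) 0 - max (min τ (u n)) 0| := by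
      rw [hκ]; simp only; rw [max_comm 0 (min τ (u m)), max_comm 0 (min τ (u n))]
    rw [h1]
    calc |max (min τ (u m)) 0 - max (min τ (u n)) 0| ≤ |min τ (u m) - min τ (u n)| :=
          abs_max_sub_max_le_abs _ _ _
      _ ≤ max |τ - τ| |u m - u n| := abs_min_sub_min_le_max _ _ _ _
      _ = |u m - u n| := by simp
      _ = u n - u m := by rw [abs_sub_comm, abs_of_nonneg (by linarith [humono hmn])]
  have hκτ : ∀ n τ, 0 ≤ τ → τ ≤ u n → κ n τ = τ := by
    intro n τ h1 h2
    rw [hκ]; simp [min_eq_left h2, max_eq_right h1]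
  set ζ : ℕ → ℝ → X := fun n τ => η n (κ n τ) with hζ
  have hζd : ∀ m n, m ≤ n → ∀ τ, dist (ζ m τ) (ζ n τ) ≤ L * (u n - u m) := by
    intro m n hmn τ
    have e1 : η m (κ m τ) = η n (κ m τ) := hco m n hmn _ (hκmem m τ)
    rw [hζ]; simp only
    rw [e1]
    calc dist (η n (κ m τ)) (η n (κ n τ)) ≤ L * dist (κ m τ) (κ n τ) :=
          (hηL n).dist_le_mul _ _
      _ ≤ L * (u n - u m) := by
          apply mul_le_mul_of_nonneg_left _ L.coe_nonneg
          rw [Real.dist_eq]; exact hκbd m n hmn τ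
  have hcau : ∀ τ, CauchySeq (fun n => ζ n τ) := by
    intro τ
    apply cauchySeq_of_le_tendsto_0 (fun N => L * (T - u N))
    · intro n m N hn hm
      rcases le_total n m with h | h
      · calc dist (ζ n τ) (ζ m τ) ≤ L * (u m - u n) := hζd n m h τ
          _ ≤ L * (T - u N) := by
              apply mul_le_mul_of_nonneg_left _ L.coe_nonneg
              have := huT m; have := humono hn; linarith
      · rw [dist_comm]
        calc dist (ζ m τ) (ζ n τ) ≤ L * (u n - u m) := hζd m n h τ
          _ ≤ L * (T - u N) := by
              apply mul_le_mul_of_nonneg_left _ L.coe_nonneg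
              have := huT n; have := humono hm; linarith
    · have : Tendsto (fun N => T - u N) atTop (𝓝 (T - T)) := tendsto_const_nhds.sub hulim
      rw [sub_self] at this
      simpa using (tendsto_const_nhds (x := (L:ℝ))).mul this
  have hΦex : ∀ τ, ∃ x : X, Tendsto (fun n => ζ n τ) atTop (𝓝 x) :=
    fun τ => cauchySeq_tendsto_of_complete (hcau τ)
  choose Φ hΦ using hΦex
  have hΦL : LipschitzWith L Φ := by
    apply LipschitzWith.of_dist_le_mul
    intro s t
    refine le_of_tendsto ((hΦ s).dist (hΦ t)) (Eventually.of_forall fun n => ?_)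
    calc dist (ζ n s) (ζ n t) ≤ L * dist (κ n s) (κ n t) := (hηL n).dist_le_mul _ _
      _ ≤ L * dist s t := by
          apply mul_le_mul_of_nonneg_left _ L.coe_nonneg
          rw [Real.dist_eq, Real.dist_eq]; exact hκlip n s t
  have hΦ0 : Φ 0 = x0 := by
    have : ∀ n, ζ n 0 = x0 := by
      intro n
      rw [hζ]; simp only
      rw [hκτ n 0 le_rfl (huI n).1, hη0]
    refine tendsto_nhds_unique (hΦ 0) ?_
    simp only [this]
    exact tendsto_const_nhds
  have hA : ∀ m, U (Φ (u m)) = γ (u m) := by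
    intro m
    have hev : ∀ᶠ n in atTop, U (ζ n (u m)) = γ (u m) := by
      filter_upwards [eventually_ge_atTop m] with n hn
      rw [hζ]; simp only
      rw [hκτ n (u m) (huI m).1 (humono hn)]
      rw [← hco m n hn (u m) ⟨(huI m).1, le_rfl⟩]
      exact hηlift m (u m) ⟨(huI m).1, le_rfl⟩
    refine tendsto_nhds_unique ((hUc.continuousAt.tendsto).comp (hΦ (u m))) ?_
    exact Tendsto.congr' (hev.mono fun n h => h.symm) tendsto_const_nhds
  have hB : ∀ τ, 0 ≤ τ → τ < T → U (Φ τ) = γ τ := by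
    intro τ h1 h2
    have hev : ∀ᶠ n in atTop, U (ζ n τ) = γ τ := by
      filter_upwards [hulim.eventually (eventually_gt_nhds h2)] with n hn
      rw [hζ]; simp only
      rw [hκτ n τ h1 hn.le]
      exact hηlift n τ ⟨h1, hn.le⟩
    refine tendsto_nhds_unique ((hUc.continuousAt.tendsto).comp (hΦ τ)) ?_
    exact Tendsto.congr' (hev.mono fun n h => h.symm) tendsto_const_nhds
  have hC : U (Φ T) = γ T := by
    have t1 : Tendsto (fun m => U (Φ (u m))) atTop (𝓝 (U (Φ T))) :=
      ((hUc.comp hΦL.continuous).continuousAt.tendsto).comp hulim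
    have t2 : Tendsto (fun m => γ (u m)) atTop (𝓝 (γ T)) :=
      (hγ.continuous.continuousAt.tendsto).comp hulim
    refine tendsto_nhds_unique t1 ?_
    exact t2.congr fun m => (hA m).symm
  have hTS : T ∈ S := by
    refine ⟨⟨hT0, hT1⟩, Φ, hΦL, hΦ0, fun τ hτ => ?_⟩
    rcases lt_or_eq_of_le hτ.2 with h | h
    · exact hB τ hτ.1 h
    · rw [h]; exact hC
  -- T = 1
  by_cases hT1' : T = 1
  · obtain ⟨-, ηf, h1, h2, h3⟩ := hTS
    exact ⟨ηf, h1, h2, fun t ht => h3 t (by rwa [hT1'])⟩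
  exfalso
  have hTlt : T < 1 := lt_of_le_of_ne hT1 hT1'
  obtain ⟨O, hO, hUO, g, hgx, hg, hgiso⟩ := hP2 (Φ T)
  have hγT : γ T = U (Φ T) := hC.symm
  have hD : ∀ τ ∈ Icc (0:ℝ) T, U (Φ τ) = γ τ := by
    rintro τ ⟨h1, h2⟩
    rcases lt_or_eq_of_le h2 with h | h
    · exact hB τ h1 h
    · rw [h]; exact hC
  have hmem : γ ⁻¹' O ∈ 𝓝 T := hγ.continuous.continuousAt (hO.mem_nhds (by rw [hγT]; exact hUO))
  obtain ⟨δ, hδ, hball⟩ := Metric.mem_nhds_iff.mp hmem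
  set t' := min 1 (T + δ/2) with ht'
  have hTt' : T < t' := lt_min hTlt (by linarith)
  have ht'I : t' ∈ Icc (0:ℝ) 1 := ⟨le_trans hT0 hTt'.le, min_le_left _ _⟩
  have ht'δ : t' - T ≤ δ/2 := by
    have : t' ≤ T + δ/2 := min_le_right _ _
    linarith
  set ρ : ℝ → ℝ := fun τ => max T (min τ t') with hρ
  have hρmem : ∀ τ, ρ τ ∈ Icc T t' := fun τ =>
    ⟨le_max_left _ _, max_le hTt'.le (min_le_right _ _)⟩
  have hρball : ∀ τ, ρ τ ∈ ball T δ := by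
    intro τ
    rw [mem_ball, Real.dist_eq, abs_of_nonneg (by linarith [(hρmem τ).1])]
    have := (hρmem τ).2; linarith
  have hρO : ∀ τ, γ (ρ τ) ∈ O := fun τ => hball (hρball τ)
  have hγTO : γ T ∈ O := by rw [hγT]; exact hUO
  have hgT : g (γ T) = Φ T := by rw [hγT]; exact hgx
  set η' : ℝ → X := fun τ => if τ ≤ T then Φ τ else g (γ (ρ τ)) with hη'
  have hρlip : ∀ σ τ, |ρ σ - ρ τ| ≤ |σ - τ| := by
    intro σ τ
    calc |ρ σ - ρ τ| = |max (min σ t') T - max (min τ t') T| := by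
          rw [hρ]; simp only; rw [max_comm T (min σ t'), max_comm T (min τ t')]
      _ ≤ |min σ t' - min τ t'| := abs_max_sub_max_le_abs _ _ _
      _ ≤ max |σ - τ| |t' - t'| := abs_min_sub_min_le_max _ _ _ _
      _ = |σ - τ| := by simp
  have hstep : ∀ σ τ, σ ≤ τ → dist (η' σ) (η' τ) ≤ L * (τ - σ) := by
    intro σ τ hστ
    rw [hη']; simp only
    rcases le_or_gt τ T with hτT | hτT
    · rw [if_pos (le_trans hστ hτT), if_pos hτT]
      calc dist (Φ σ) (Φ τ) ≤ L * dist σ τ := hΦL.dist_le_mul _ _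
        _ = L * (τ - σ) := by rw [Real.dist_eq, abs_of_nonpos (by linarith)]; ring_nf
    rcases le_or_gt σ T with hσT | hσT
    · rw [if_pos hσT, if_neg (not_le.mpr hτT)]
      have e1 : dist (Φ σ) (Φ T) ≤ L * (T - σ) := by
        calc dist (Φ σ) (Φ T) ≤ L * dist σ T := hΦL.dist_le_mul _ _
          _ = L * (T - σ) := by rw [Real.dist_eq, abs_of_nonpos (by linarith)]; ring_nf
      have e2 : dist (Φ T) (g (γ (ρ τ))) ≤ L * (τ - T) := by
        rw [← hgT, hgiso _ hγTO _ (hρO τ)]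
        calc dist (γ T) (γ (ρ τ)) ≤ L * dist T (ρ τ) := hγ.dist_le_mul _ _
          _ ≤ L * (τ - T) := by
              apply mul_le_mul_of_nonneg_left _ L.coe_nonneg
              rw [Real.dist_eq, abs_of_nonpos (by linarith [(hρmem τ).1])]
              have : ρ τ ≤ τ := max_le hτT.le (min_le_left _ _)
              linarith
      calc dist (Φ σ) (g (γ (ρ τ))) ≤ dist (Φ σ) (Φ T) + dist (Φ T) (g (γ (ρ τ))) :=
            dist_triangle _ _ _
        _ ≤ L * (T - σ) + L * (τ - T) := add_le_add e1 e2
        _ = L * (τ - σ) := by ring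
    · rw [if_neg (not_le.mpr hσT), if_neg (not_le.mpr hτT)]
      rw [hgiso _ (hρO σ) _ (hρO τ)]
      calc dist (γ (ρ σ)) (γ (ρ τ)) ≤ L * dist (ρ σ) (ρ τ) := hγ.dist_le_mul _ _
        _ ≤ L * (τ - σ) := by
            apply mul_le_mul_of_nonneg_left _ L.coe_nonneg
            rw [Real.dist_eq]
            calc |ρ σ - ρ τ| ≤ |σ - τ| := hρlip σ τ
              _ = τ - σ := by rw [abs_of_nonpos (by linarith)]; ring
  have hη'L : LipschitzWith L η' := by
    apply LipschitzWith.of_dist_le_mul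
    intro σ τ
    rcases le_total σ τ with h | h
    · calc dist (η' σ) (η' τ) ≤ L * (τ - σ) := hstep σ τ h
        _ = L * dist σ τ := by rw [Real.dist_eq, abs_of_nonpos (by linarith)]; ring_nf
    · rw [dist_comm]
      calc dist (η' τ) (η' σ) ≤ L * (σ - τ) := hstep τ σ h
        _ = L * dist σ τ := by rw [Real.dist_eq, abs_of_nonneg (by linarith)]
  have hη'0 : η' 0 = x0 := by rw [hη']; simp only [if_pos hT0]; exact hΦ0
  have ht'S : t' ∈ S := by
    refine ⟨ht'I, η', hη'L, hη'0, fun τ hτ => ?_⟩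
    rw [hη']; simp only
    rcases le_or_gt τ T with h | h
    · rw [if_pos h]; exact hD τ ⟨hτ.1, h⟩
    · rw [if_neg (not_le.mpr h)]
      have hρτ : ρ τ = τ := by
        rw [hρ]; simp only
        rw [min_eq_left hτ.2, max_eq_right h.le]
      rw [hρτ]
      refine hg _ ?_
      rw [← hρτ]; exact hρO τ
  exact absurd (le_csSup hbdd ht'S) (not_le.mpr hTt')

end ScottishBook155Aux

/-- Problem 155 of the Scottish Book for local isometries: a local isometry between
real Banach spaces (every point has an open neighborhood on which the map is
distance-preserving onto an open subset) is a surjective (indeed bijective) global isometry. -/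
theorem local_isometry_is_isometry
    {X Y : Type*} [NormedAddCommGroup X] [NormedSpace ℝ X] [CompleteSpace X]
    [NormedAddCommGroup Y] [NormedSpace ℝ Y] [CompleteSpace Y]
    (U : X → Y)
    (hloc : ∀ x : X, ∃ V : Set X, IsOpen V ∧ x ∈ V ∧
      (∀ u ∈ V, ∀ v ∈ V, ‖U u - U v‖ = ‖u - v‖) ∧ IsOpen (U '' V)) :
    Function.Bijective U ∧ ∀ x y : X, ‖U x - U y‖ = ‖x - y‖ := by
  classical
  have hP1 : ∀ x : X, ∃ ε > 0, ∀ u v : X,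
      dist u x < ε → dist v x < ε → dist (U u) (U v) = dist u v := by
    intro x
    obtain ⟨V, hVo, hxV, hdist, -⟩ := hloc x
    obtain ⟨ε, hε, hball⟩ := Metric.isOpen_iff.mp hVo x hxV
    exact ⟨ε, hε, fun u v hu hv => by
      rw [dist_eq_norm, dist_eq_norm]; exact hdist u (hball hu) v (hball hv)⟩
  have hP2 : ∀ x : X, ∃ O : Set Y, IsOpen O ∧ U x ∈ O ∧ ∃ g : Y → X, g (U x) = x ∧
      (∀ y ∈ O, U (g y) = y) ∧ ∀ y ∈ O, ∀ y' ∈ O, dist (g y) (g y') = dist y y' := by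
    intro x
    obtain ⟨V, hVo, hxV, hdist, himg⟩ := hloc x
    have hdist' : ∀ u ∈ V, ∀ v ∈ V, dist (U u) (U v) = dist u v := fun u hu v hv => by
      rw [dist_eq_norm, dist_eq_norm]; exact hdist u hu v hv
    refine ⟨U '' V, himg, ⟨x, hxV, rfl⟩, ?_⟩
    set g : Y → X := fun y => if h : ∃ u, u ∈ V ∧ U u = y then h.choose else x with hgdef
    have hgmem : ∀ y ∈ U '' V, g y ∈ V ∧ U (g y) = y := by
      intro y hy
      obtain ⟨u, hu, he⟩ := hy
      have hex : ∃ u, u ∈ V ∧ U u = y := ⟨u, hu, he⟩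
      rw [hgdef]; simp only
      rw [dif_pos hex]
      exact ⟨hex.choose_spec.1, hex.choose_spec.2⟩
    refine ⟨g, ?_, fun y hy => (hgmem y hy).2, fun y hy y' hy' => ?_⟩
    · have h1 := hgmem (U x) ⟨x, hxV, rfl⟩
      have h2 : dist (g (U x)) x = 0 := by
        rw [← hdist' _ h1.1 _ hxV, h1.2]; simp
      exact dist_eq_zero.mp h2
    · rw [← hdist' _ (hgmem y hy).1 _ (hgmem y' hy').1, (hgmem y hy).2, (hgmem y' hy').2]
  have hU1 : LipschitzWith 1 U := U_lip hP1
  have hUc : Continuous U := hU1.continuous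
  -- clamp function
  set cl : ℝ → ℝ := fun t => max 0 (min t 1) with hcl
  have hcl0 : cl 0 = 0 := by norm_num [hcl]
  have hcl1 : cl 1 = 1 := by norm_num [hcl]
  have hcllip : ∀ s t : ℝ, |cl s - cl t| ≤ |s - t| := by
    intro s t
    have := clamp_lip.dist_le_mul s t
    simpa [Real.dist_eq] using this
  have hclmem : ∀ t, cl t ∈ Icc (0:ℝ) 1 := clamp_mem
  -- Injectivity
  have hinj : Function.Injective U := by
    intro a b hab
    set K : ℝ≥0 := ‖b - a‖₊ with hK
    set p : ℝ → X := fun t => a + cl t • (b - a) with hp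
    have hpL : LipschitzWith K p := by
      apply LipschitzWith.of_dist_le_mul
      intro s t
      have e1 : p s - p t = (cl s - cl t) • (b - a) := by rw [hp]; simp only; module
      rw [dist_eq_norm, e1, norm_smul, Real.norm_eq_abs]
      have e2 : (K : ℝ) = ‖b - a‖ := rfl
      rw [e2, Real.dist_eq, mul_comm (‖b - a‖)]
      exact mul_le_mul_of_nonneg_right (hcllip s t) (norm_nonneg _)
    set ℓ : ℝ → Y := fun t => U (p t) with hℓ
    have hℓL : LipschitzWith K ℓ := by
      have := hU1.comp hpL
      rwa [one_mul] at this
    set y : Y := U a with hy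
    have hp0 : p 0 = a := by rw [hp]; simp [hcl0]
    have hp1 : p 1 = b := by rw [hp]; simp [hcl1]
    have hℓ0 : ℓ 0 = y := by rw [hℓ]; simp only; rw [hp0, hy]
    have hℓ1 : ℓ 1 = y := by rw [hℓ]; simp only; rw [hp1, ← hab]
    set H : ℝ → ℝ → Y := fun s t => y + (1 - cl s) • (ℓ t - y) with hH
    have hH0 : ∀ s, H s 0 = y := by intro s; rw [hH]; simp [hℓ0]
    have hH1 : ∀ s, H s 1 = y := by intro s; rw [hH]; simp [hℓ1]
    have hHL : ∀ s, LipschitzWith K (fun t => H s t) := by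
      intro s
      apply LipschitzWith.of_dist_le_mul
      intro t t'
      rw [dist_eq_norm,
        show H s t - H s t' = (1 - cl s) • (ℓ t - ℓ t') by rw [hH]; simp only; module,
        norm_smul, Real.norm_eq_abs]
      have h1 : |1 - cl s| ≤ 1 := by
        have := hclmem s
        rw [abs_le]; constructor <;> [linarith [this.2]; linarith [this.1]]
      calc |1 - cl s| * ‖ℓ t - ℓ t'‖ ≤ 1 * ‖ℓ t - ℓ t'‖ :=
            mul_le_mul_of_nonneg_right h1 (norm_nonneg _)
        _ = ‖ℓ t - ℓ t'‖ := one_mul _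
        _ ≤ K * dist t t' := by
            have := hℓL.dist_le_mul t t'
            rwa [dist_eq_norm] at this
    have hΨex : ∀ s : ℝ, ∃ η : ℝ → X, LipschitzWith K η ∧ η 0 = a ∧
        ∀ t ∈ Icc (0:ℝ) 1, U (η t) = H s t :=
      fun s => lift_exists' hP1 hP2 hUc (hHL s) a (by rw [hH0 s, hy])
    choose Ψ hΨL hΨ0 hΨlift using hΨex
    set φ : ℝ → X := fun s => Ψ s 1 with hφ
    have hHd : ∀ s s' t, t ∈ Icc (0:ℝ) 1 → dist (H s t) (H s' t) ≤ ‖b - a‖ * |s' - s| := by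
      intro s s' t ht
      rw [dist_eq_norm,
        show H s t - H s' t = (cl s' - cl s) • (ℓ t - y) by rw [hH]; simp only; module,
        norm_smul, Real.norm_eq_abs]
      have h2 : ‖ℓ t - y‖ ≤ ‖b - a‖ := by
        rw [← hℓ0]
        have h3 := hℓL.dist_le_mul t 0
        rw [dist_eq_norm] at h3
        calc ‖ℓ t - ℓ 0‖ ≤ K * dist t 0 := h3
          _ ≤ ‖b - a‖ * 1 := by
              rw [show ((K:ℝ)) = ‖b - a‖ from rfl]
              apply mul_le_mul_of_nonneg_left _ (norm_nonneg _)
              rw [Real.dist_eq, sub_zero, abs_of_nonneg ht.1]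
              exact ht.2
          _ = ‖b - a‖ := mul_one _
      calc |cl s' - cl s| * ‖ℓ t - y‖ ≤ |s' - s| * ‖b - a‖ :=
            mul_le_mul (hcllip s' s) h2 (norm_nonneg _) (abs_nonneg _)
        _ = ‖b - a‖ * |s' - s| := mul_comm _ _
    have hlc : ∀ s : ℝ, ∃ ρ > 0, ∀ s', |s' - s| < ρ → φ s' = φ s := by
      intro s
      have hKc : IsCompact (Ψ s '' Icc 0 1) := isCompact_Icc.image (hΨL s).continuous
      obtain ⟨δ, hδ, hrad⟩ := uniform_radius' hP1 hKc
      set C : ℝ := ‖b - a‖ with hC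
      have hCnn : (0:ℝ) ≤ C := norm_nonneg _
      have hC1 : (0:ℝ) < C + 1 := by linarith
      refine ⟨δ / (2 * (C + 1)), by positivity, fun s' hs' => ?_⟩
      set c : ℝ := C * |s' - s| with hc
      have hcnn : 0 ≤ c := mul_nonneg hCnn (abs_nonneg _)
      have h2c : 2 * c < δ := by
        have h1 : c ≤ C * (δ / (2 * (C + 1))) :=
          mul_le_mul_of_nonneg_left hs'.le hCnn
        have h4 : 2 * (C * (δ / (2 * (C + 1)))) = δ * (C / (C + 1)) := by
          field_simp
        have h5 : δ * (C / (C + 1)) < δ * 1 :=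
          mul_lt_mul_of_pos_left ((div_lt_one hC1).mpr (by linarith)) hδ
        linarith
      have hrad' : ∀ t ∈ Icc (0:ℝ) 1, ∀ u v : X, dist u (Ψ s t) < δ →
          dist v (Ψ s t) < δ → dist (U u) (U v) = dist u v :=
        fun t ht u v hu hv => hrad (Ψ s t) ⟨t, ht, rfl⟩ u v hu hv
      have hcmp := lift_compare' hP1 ((hΨL s).continuous.continuousOn)
        ((hΨL s').continuous.continuousOn) (hΨlift s) (hΨlift s') hrad'
        (fun t ht => hHd s s' t ht) h2c (by rw [hΨ0 s, hΨ0 s'])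
      have hfin := hcmp 1 ⟨zero_le_one, le_rfl⟩
      rw [hH1 s, hH1 s'] at hfin
      simp only [dist_self] at hfin
      exact (dist_eq_zero.mp hfin).symm
    -- the endpoint map is constant
    have hconst : φ 1 = φ 0 := by
      set Z : Set ℝ := {s | φ s = φ 0} with hZ
      have hZo : IsOpen Z := by
        rw [isOpen_iff_forall_mem_open]
        intro s hs
        obtain ⟨ρ, hρ, hball⟩ := hlc s
        refine ⟨ball s ρ, fun s' hs' => ?_, isOpen_ball, mem_ball_self hρ⟩
        have := hball s' (by rwa [mem_ball, Real.dist_eq] at hs')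
        rw [hZ] at hs ⊢
        simp only [mem_setOf_eq] at hs ⊢
        rw [this, hs]
      have hZco : IsOpen Zᶜ := by
        rw [isOpen_iff_forall_mem_open]
        intro s hs
        obtain ⟨ρ, hρ, hball⟩ := hlc s
        refine ⟨ball s ρ, fun s' hs' => ?_, isOpen_ball, mem_ball_self hρ⟩
        have := hball s' (by rwa [mem_ball, Real.dist_eq] at hs')
        intro hmem
        apply hs
        rw [hZ] at hmem ⊢
        simp only [mem_setOf_eq] at hmem ⊢
        rw [← this, hmem]
      have hcp : IsClopen Z := ⟨isOpen_compl_iff.mp hZco, hZo⟩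
      have : Z = univ := hcp.eq_univ ⟨0, rfl⟩
      have h1Z : (1:ℝ) ∈ Z := this ▸ mem_univ 1
      exact h1Z
    have hφ0 : φ 0 = b := by
      have heq : ∀ t ∈ Icc (0:ℝ) 1, U (Ψ 0 t) = U (p t) := by
        intro t ht
        rw [hΨlift 0 t ht, hH]; simp only [hcl0]
        have e : ℓ t = U (p t) := rfl
        rw [← e]; module
      have := lift_unique' hP1 ((hΨL 0).continuous.continuousOn)
        (hpL.continuous.continuousOn) heq (by rw [hΨ0 0, hp0]) zero_le_one
      rw [hφ]; simp only
      rw [this 1 ⟨zero_le_one, le_rfl⟩, hp1]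
    have hφ1 : φ 1 = a := by
      have heq : ∀ t ∈ Icc (0:ℝ) 1, U (Ψ 1 t) = U ((fun _ => a) t) := by
        intro t ht
        rw [hΨlift 1 t ht, hH]; simp only [hcl1]
        rw [← hy]; module
      have := lift_unique' hP1 ((hΨL 1).continuous.continuousOn)
        (continuous_const.continuousOn) heq (by rw [hΨ0 1]) zero_le_one
      rw [hφ]; simp only
      rw [this 1 ⟨zero_le_one, le_rfl⟩]
    rw [← hφ1, hconst, hφ0]
  -- Surjectivity
  have hsurj : Function.Surjective U := by
    intro y'
    set γ : ℝ → Y := fun t => U 0 + cl t • (y' - U 0) with hγdef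
    have hγL : LipschitzWith ‖y' - U 0‖₊ γ := by
      apply LipschitzWith.of_dist_le_mul
      intro s t
      rw [hγdef]; simp only
      rw [dist_eq_norm,
        show U 0 + cl s • (y' - U 0) - (U 0 + cl t • (y' - U 0))
          = (cl s - cl t) • (y' - U 0) by module,
        norm_smul, Real.norm_eq_abs, coe_nnnorm, Real.dist_eq, mul_comm (‖y' - U 0‖)]
      exact mul_le_mul_of_nonneg_right (hcllip s t) (norm_nonneg _)
    have hγ0 : U 0 = γ 0 := by rw [hγdef]; simp [hcl0]
    obtain ⟨η, hηL, hη0, hηlift⟩ := lift_exists' hP1 hP2 hUc hγL 0 hγ0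
    refine ⟨η 1, ?_⟩
    rw [hηlift 1 ⟨zero_le_one, le_rfl⟩, hγdef]
    simp [hcl1]
  -- Distance preservation
  have hiso : ∀ x z : X, dist (U x) (U z) = dist x z := by
    intro x z
    refine le_antisymm (by simpa using hU1.dist_le_mul x z) ?_
    set γ : ℝ → Y := fun t => U x + cl t • (U z - U x) with hγdef
    have hγL : LipschitzWith ‖U z - U x‖₊ γ := by
      apply LipschitzWith.of_dist_le_mul
      intro s t
      rw [hγdef]; simp only
      rw [dist_eq_norm,
        show U x + cl s • (U z - U x) - (U x + cl t • (U z - U x))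
          = (cl s - cl t) • (U z - U x) by module,
        norm_smul, Real.norm_eq_abs, coe_nnnorm, Real.dist_eq, mul_comm (‖U z - U x‖)]
      exact mul_le_mul_of_nonneg_right (hcllip s t) (norm_nonneg _)
    have hγ0 : U x = γ 0 := by rw [hγdef]; simp [hcl0]
    obtain ⟨η, hηL, hη0, hηlift⟩ := lift_exists' hP1 hP2 hUc hγL x hγ0
    have hη1 : U (η 1) = U z := by
      rw [hηlift 1 ⟨zero_le_one, le_rfl⟩, hγdef]
      simp [hcl1]
    have hη1z : η 1 = z := hinj hη1
    calc dist x z = dist (η 0) (η 1) := by rw [hη0, hη1z]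
      _ ≤ ‖U z - U x‖₊ * dist (0:ℝ) 1 := hηL.dist_le_mul 0 1
      _ = ‖U z - U x‖ := by
          rw [coe_nnnorm]
          simp [Real.dist_eq]
      _ = dist (U x) (U z) := by rw [dist_eq_norm, norm_sub_rev]
  refine ⟨⟨hinj, hsurj⟩, fun x z => ?_⟩
  have := hiso x z
  rwa [dist_eq_norm, dist_eq_norm] at this
end

section
/- Let X and Y be real Banach spaces and let U : X → Y be a bijection which is locally isometric, i.e. every x ∈ X has an open neighborhood V such that U restricted to V is isometric. If the inverse map U⁻¹ : Y → X is continuous, then U is an isometry: ‖U(x) − U(y)‖ = ‖x − y‖ for all x, y ∈ X. -/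
/-- A locally isometric map between real normed spaces is 1-Lipschitz. -/
lemma loc_iso_le {X Y : Type*} [NormedAddCommGroup X] [NormedSpace ℝ X]
    [NormedAddCommGroup Y]
    (f : X → Y)
    (hloc : ∀ x : X, ∃ V : Set X, IsOpen V ∧ x ∈ V ∧
      ∀ u ∈ V, ∀ v ∈ V, ‖f u - f v‖ = ‖u - v‖) :
    ∀ x y : X, ‖f x - f y‖ ≤ ‖x - y‖ := by
  intro x y
  set c := ‖y - x‖ with hc
  set s : ℝ → X := fun t => x + t • (y - x) with hs
  have hsdiff : ∀ t t' : ℝ, ‖s t - s t'‖ = |t - t'| * c := by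
    intro t t'
    have : s t - s t' = (t - t') • (y - x) := by
      simp [hs, sub_smul]
    rw [this, norm_smul, Real.norm_eq_abs]
  set S : Set ℝ := {t | t ∈ Set.Icc (0:ℝ) 1 ∧ ‖f (s t) - f x‖ ≤ t * c} with hS
  have h0 : (0:ℝ) ∈ S := by
    constructor
    · exact ⟨le_refl 0, zero_le_one⟩
    · simp [hs]
  have hbdd : BddAbove S := ⟨1, fun t ht => ht.1.2⟩
  have hne : S.Nonempty := ⟨0, h0⟩
  set T := sSup S with hT
  have hT0 : 0 ≤ T := le_csSup hbdd h0
  have hT1 : T ≤ 1 := csSup_le hne fun t ht => ht.1.2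
  obtain ⟨V, hVo, hmem, hiso⟩ := hloc (s T)
  obtain ⟨ε, hε, hball⟩ := Metric.isOpen_iff.1 hVo (s T) hmem
  set δ := ε / (c + 1) with hδ
  have hc0 : 0 ≤ c := norm_nonneg _
  have hδ0 : 0 < δ := div_pos hε (by linarith)
  have hnear : ∀ t : ℝ, |t - T| < δ → s t ∈ V := by
    intro t ht
    apply hball
    rw [Metric.mem_ball, dist_eq_norm, hsdiff]
    calc |t - T| * c ≤ |t - T| * (c + 1) := by
          apply mul_le_mul_of_nonneg_left (by linarith) (abs_nonneg _)
      _ < δ * (c + 1) := by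
          apply mul_lt_mul_of_pos_right ht (by linarith)
      _ = ε := by rw [hδ, div_mul_cancel₀ ε (ne_of_gt (by linarith))]
  -- T ∈ S
  have hTS : T ∈ S := by
    refine ⟨⟨hT0, hT1⟩, ?_⟩
    obtain ⟨t, htS, htgt⟩ := exists_lt_of_lt_csSup hne (show T - δ < T by linarith)
    have htle : t ≤ T := le_csSup hbdd htS
    have habs : |t - T| < δ := by rw [abs_sub_lt_iff]; constructor <;> linarith
    have h1 : ‖f (s T) - f (s t)‖ = (T - t) * c := by
      rw [hiso _ (hnear T (by simpa using hδ0)) _ (hnear t habs), hsdiff,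
        abs_of_nonneg (by linarith)]
    calc ‖f (s T) - f x‖ ≤ ‖f (s T) - f (s t)‖ + ‖f (s t) - f x‖ := norm_sub_le_norm_sub_add_norm_sub _ _ _
      _ ≤ (T - t) * c + t * c := by rw [h1]; linarith [htS.2]
      _ = T * c := by ring
  -- T = 1
  have hTeq : T = 1 := by
    by_contra h
    have hTlt : T < 1 := lt_of_le_of_ne hT1 h
    set t' := min 1 (T + δ / 2) with ht'
    have ht'T : T < t' := lt_min hTlt (by linarith)
    have ht'1 : t' ≤ 1 := min_le_left _ _
    have ht'd : t' ≤ T + δ / 2 := min_le_right _ _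
    have habs : |t' - T| < δ := by rw [abs_sub_lt_iff]; constructor <;> linarith
    have h1 : ‖f (s t') - f (s T)‖ = (t' - T) * c := by
      rw [hiso _ (hnear t' habs) _ (hnear T (by simpa using hδ0)), hsdiff,
        abs_of_nonneg (by linarith)]
    have ht'S : t' ∈ S := by
      refine ⟨⟨by linarith, ht'1⟩, ?_⟩
      calc ‖f (s t') - f x‖ ≤ ‖f (s t') - f (s T)‖ + ‖f (s T) - f x‖ :=
            norm_sub_le_norm_sub_add_norm_sub _ _ _
        _ ≤ (t' - T) * c + T * c := by rw [h1]; linarith [hTS.2]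
        _ = t' * c := by ring
    exact absurd (le_csSup hbdd ht'S) (not_le.2 ht'T)
  have := hTS.2
  rw [hTeq] at this
  simp only [hs, one_smul, one_mul] at this
  have hxy : x + (y - x) = y := by abel
  rw [hxy] at this
  calc ‖f x - f y‖ = ‖f y - f x‖ := norm_sub_rev _ _
    _ ≤ 1 * c := by simpa using this
    _ = ‖x - y‖ := by rw [one_mul, hc, norm_sub_rev]

/-- Corollary: a locally isometric bijection between real Banach spaces with continuous
inverse is a global isometry. -/
theorem locally_isometric_bijection_continuous_inverse_is_isometry
    {X Y : Type*} [NormedAddCommGroup X] [NormedSpace ℝ X] [CompleteSpace X]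
    [NormedAddCommGroup Y] [NormedSpace ℝ Y] [CompleteSpace Y]
    (U : X → Y) (Uinv : Y → X)
    (hleft : Function.LeftInverse Uinv U) (hright : Function.RightInverse Uinv U)
    (hloc : ∀ x : X, ∃ V : Set X, IsOpen V ∧ x ∈ V ∧
      ∀ u ∈ V, ∀ v ∈ V, ‖U u - U v‖ = ‖u - v‖)
    (hcont : Continuous Uinv) :
    ∀ x y : X, ‖U x - U y‖ = ‖x - y‖ := by
  have hloc' : ∀ y : Y, ∃ W : Set Y, IsOpen W ∧ y ∈ W ∧
      ∀ a ∈ W, ∀ b ∈ W, ‖Uinv a - Uinv b‖ = ‖a - b‖ := by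
    intro y
    obtain ⟨V, hVo, hmem, hiso⟩ := hloc (Uinv y)
    refine ⟨Uinv ⁻¹' V, hVo.preimage hcont, hmem, ?_⟩
    intro a ha b hb
    have := hiso _ ha _ hb
    rw [hright a, hright b] at this
    exact this.symm
  intro x y
  refine le_antisymm (loc_iso_le U hloc x y) ?_
  have := loc_iso_le Uinv hloc' (U x) (U y)
  rwa [hleft x, hleft y] at this
end

section
/- Let X be a real Banach space and let σ : X × X × [0,1] → X be a convex bicombing, i.e. (i) for all x, y ∈ X the map σ_{xy} := σ(x, y, ·) satisfies ‖σ_{xy}(s) − σ_{xy}(t)‖ = |s − t|·‖x − y‖ for all s, t ∈ [0,1], σ_{xy}(0) = x and σ_{xy}(1) = y, and (ii) for all x, y, x′, y′ ∈ X the function t ↦ ‖σ_{xy}(t) − σ_{x′y′}(t)‖ is convex on [0,1]. Then σ(x, y, t) = (1−t)x + t y for all x, y ∈ X and t ∈ [0,1]. -/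
open Set Filter

lemma sum_eq_zero_of_dist_ineq {V : Type*} [NormedAddCommGroup V] [NormedSpace ℝ V]
    [FiniteDimensional ℝ V] (p q : V)
    (H : ∀ w : V, 2 * ‖w‖ ≤ ‖p - w‖ + ‖q - w‖) : p + q = 0 := by
  set e := p + q with he
  have key : ∀ δ : ℝ, 0 < δ → ‖e‖ ≤ 2 * δ := by
    intro δ hδ
    obtain ⟨u, hu, hud⟩ :
        ∃ u : V, DifferentiableAt ℝ (‖·‖) u ∧ ‖u - e‖ < δ := by
      have hd := dense_differentiableAt_norm (E := V)
      obtain ⟨u, hu1, hu2⟩ := hd.exists_dist_lt e hδ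
      exact ⟨u, hu1, by simpa [dist_eq_norm, norm_sub_rev] using hu2⟩
    set φ := fderiv ℝ (‖·‖ : V → ℝ) u with hφ
    have hNu : HasFDerivAt (‖·‖ : V → ℝ) φ u := hu.hasFDerivAt
    -- global min of the auxiliary function
    have hineq : ∀ t : ℝ, ‖u‖ + ‖u‖ ≤ ‖u + t • p‖ + ‖u + t • q‖ := by
      intro t
      rcases eq_or_ne t 0 with rfl | ht
      · simp
      · have h := H ((-(1 / t)) • u)
        have e1 : ∀ r : V, u + t • r = t • (r - (-(1 / t)) • u) := by
          intro r
          rw [smul_sub, smul_smul]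
          field_simp
          simp only [neg_smul, one_smul, smul_eq_mul, mul_one, neg_neg]
          abel
        have e2 : ‖(-(1 / t)) • u‖ = ‖u‖ / |t| := by
          rw [norm_smul]
          simp [abs_div, div_eq_mul_inv, mul_comm]
        calc ‖u‖ + ‖u‖ = |t| * (2 * (‖u‖ / |t|)) := by
              field_simp [abs_ne_zero.2 ht]; ring
          _ ≤ |t| * (‖p - (-(1 / t)) • u‖ + ‖q - (-(1 / t)) • u‖) := by
              rw [← e2]
              exact mul_le_mul_of_nonneg_left (by simpa [e2] using h) (abs_nonneg t)
          _ = ‖u + t • p‖ + ‖u + t • q‖ := by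
              rw [e1 p, e1 q, norm_smul, norm_smul, mul_add, Real.norm_eq_abs]
    -- derivative of the auxiliary function at 0
    have hdp : HasDerivAt (fun t : ℝ => ‖u + t • p‖) (φ p) 0 := by
      have hc : HasDerivAt (fun t : ℝ => u + t • p) p 0 := by
        simpa using ((hasDerivAt_id (0 : ℝ)).smul_const p).const_add u
      have hNu' : HasFDerivAt (‖·‖ : V → ℝ) φ (u + (0:ℝ) • p) := by simpa using hNu
      exact hNu'.comp_hasDerivAt 0 hc
    have hdq : HasDerivAt (fun t : ℝ => ‖u + t • q‖) (φ q) 0 := by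
      have hc : HasDerivAt (fun t : ℝ => u + t • q) q 0 := by
        simpa using ((hasDerivAt_id (0 : ℝ)).smul_const q).const_add u
      have hNu' : HasFDerivAt (‖·‖ : V → ℝ) φ (u + (0:ℝ) • q) := by simpa using hNu
      exact hNu'.comp_hasDerivAt 0 hc
    have hmin : IsLocalMin (fun t : ℝ => ‖u + t • p‖ + ‖u + t • q‖) 0 :=
      Filter.Eventually.of_forall fun t => by simpa using hineq t
    have hsum : φ p + φ q = 0 := hmin.hasDerivAt_eq_zero (hdp.add hdq)
    have hφe : φ e = 0 := by rw [he, map_add, hsum]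
    -- φ u = ‖u‖ by homogeneity
    have hφu : φ u = ‖u‖ := by
      have hc : HasDerivAt (fun t : ℝ => ‖u + t • u‖) (φ u) 0 := by
        have hc0 : HasDerivAt (fun t : ℝ => u + t • u) u 0 := by
          simpa using ((hasDerivAt_id (0 : ℝ)).smul_const u).const_add u
        have hNu' : HasFDerivAt (‖·‖ : V → ℝ) φ (u + (0:ℝ) • u) := by simpa using hNu
        exact hNu'.comp_hasDerivAt 0 hc0
      have hlin : HasDerivAt (fun t : ℝ => (1 + t) * ‖u‖) (‖u‖) 0 := by
        simpa using ((hasDerivAt_id (0 : ℝ)).const_add 1).mul_const ‖u‖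
      have heq : (fun t : ℝ => ‖u + t • u‖) =ᶠ[nhds (0 : ℝ)] fun t => (1 + t) * ‖u‖ := by
        filter_upwards [Ioo_mem_nhds (show (-1 : ℝ) < 0 by norm_num)
          (show (0 : ℝ) < 1 by norm_num)] with t ht
        have h1 : u + t • u = (1 + t) • u := by
          rw [add_smul, one_smul]
        rw [h1, norm_smul, Real.norm_eq_abs, abs_of_pos (by linarith [ht.1])]
      exact hc.unique (hlin.congr_of_eventuallyEq heq)
    have hφnorm : ‖φ‖ ≤ 1 := by
      simpa using hNu.le_of_lipschitz lipschitzWith_one_norm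
    have h1 : |φ (u - e)| ≤ ‖u - e‖ := by
      calc |φ (u - e)| ≤ ‖φ‖ * ‖u - e‖ := φ.le_opNorm (u - e)
        _ ≤ 1 * ‖u - e‖ := mul_le_mul_of_nonneg_right hφnorm (norm_nonneg _)
        _ = ‖u - e‖ := one_mul _
    have h2 : ‖u‖ ≤ δ := by
      have : φ u = φ (u - e) := by rw [map_sub, hφe]; ring
      calc ‖u‖ = φ (u - e) := by rw [← this, hφu]
        _ ≤ |φ (u - e)| := le_abs_self _
        _ ≤ ‖u - e‖ := h1
        _ ≤ δ := hud.le
    have h3 : ‖e‖ ≤ ‖u‖ + ‖e - u‖ := by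
      simpa using norm_add_le u (e - u)
    calc ‖e‖ ≤ ‖u‖ + ‖e - u‖ := h3
      _ ≤ δ + δ := add_le_add h2 (by rw [norm_sub_rev]; exact hud.le)
      _ = 2 * δ := by ring
  have : ‖e‖ ≤ 0 := by
    refine le_of_forall_pos_le_add fun ε hε => ?_
    calc ‖e‖ ≤ 2 * (ε / 2) := key _ (by linarith)
      _ = 0 + ε := by ring
  simpa using norm_le_zero_iff.1 this
open Set Filter

lemma midpoint_of_dist_ineq {X : Type*} [NormedAddCommGroup X] [NormedSpace ℝ X]
    (m a b : X) (H : ∀ z : X, 2 * ‖m - z‖ ≤ ‖a - z‖ + ‖b - z‖) :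
    a + b = m + m := by
  set p := a - m with hp'
  set q := b - m with hq'
  have H' : ∀ w : X, 2 * ‖w‖ ≤ ‖p - w‖ + ‖q - w‖ := by
    intro w
    have h := H (m + w)
    have e0 : m - (m + w) = -w := by abel
    have e1 : a - (m + w) = p - w := by rw [hp']; abel
    have e2 : b - (m + w) = q - w := by rw [hq']; abel
    rw [e0, e1, e2, norm_neg] at h
    exact h
  let V := Submodule.span ℝ ({p, q} : Set X)
  have hp : p ∈ V := Submodule.subset_span (by simp)
  have hq : q ∈ V := Submodule.subset_span (by simp)
  haveI : FiniteDimensional ℝ V :=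
    FiniteDimensional.span_of_finite ℝ (Set.toFinite _)
  have h0 : (⟨p, hp⟩ + ⟨q, hq⟩ : V) = 0 := by
    apply sum_eq_zero_of_dist_ineq
    intro w
    have := H' (w : X)
    simpa using this
  have hpq0 : p + q = 0 := by
    have := congrArg (fun v : V => (v : X)) h0
    simpa using this
  have h2 : a + b - (m + m) = 0 := by
    rw [show a + b - (m + m) = p + q from by rw [hp', hq']; abel]
    exact hpq0
  exact sub_eq_zero.mp h2

/-- Descombes–Lang: a convex bicombing on a real Banach space consists of the
linear segments. -/
theorem convex_bicombing_is_linear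
    {X : Type*} [NormedAddCommGroup X] [NormedSpace ℝ X] [CompleteSpace X]
    (σ : X → X → ℝ → X)
    (hends : ∀ x y : X, σ x y 0 = x ∧ σ x y 1 = y)
    (hgeo : ∀ x y : X, ∀ s ∈ Set.Icc (0 : ℝ) 1, ∀ t ∈ Set.Icc (0 : ℝ) 1,
      ‖σ x y s - σ x y t‖ = |s - t| * ‖x - y‖)
    (hconv : ∀ x y x' y' : X,
      ConvexOn ℝ (Set.Icc (0 : ℝ) 1) (fun t => ‖σ x y t - σ x' y' t‖)) :
    ∀ x y : X, ∀ t ∈ Set.Icc (0 : ℝ) 1, σ x y t = (1 - t) • x + t • y := by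
  have hzz : ∀ z : X, ∀ t ∈ Set.Icc (0 : ℝ) 1, σ z z t = z := by
    intro z t ht
    have h := hgeo z z t ht 0 ⟨le_refl 0, zero_le_one⟩
    rw [sub_self, norm_zero, mul_zero] at h
    have := norm_sub_eq_zero_iff.mp h
    rw [this, (hends z z).1]
  intro x y
  have hc0 : σ x y 0 = x := (hends x y).1
  have hc1 : σ x y 1 = y := (hends x y).2
  -- midpoint property
  have hmid : ∀ s ∈ Set.Icc (0:ℝ) 1, ∀ u ∈ Set.Icc (0:ℝ) 1,
      σ x y s + σ x y u = σ x y ((s + u) / 2) + σ x y ((s + u) / 2) := by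
    intro s hs u hu
    apply midpoint_of_dist_ineq
    intro z
    have hmm : (s + u) / 2 ∈ Set.Icc (0:ℝ) 1 :=
      ⟨by have := hs.1; have := hu.1; linarith, by have := hs.2; have := hu.2; linarith⟩
    have key := (hconv x y z z).2 hs hu (by norm_num : (0:ℝ) ≤ 1/2)
      (by norm_num : (0:ℝ) ≤ 1/2) (by norm_num : (1/2 : ℝ) + 1/2 = 1)
    simp only [smul_eq_mul] at key
    rw [show (1/2) * s + (1/2) * u = (s + u) / 2 by ring] at key
    rw [hzz z s hs, hzz z u hu, hzz z ((s + u) / 2) hmm] at key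
    linarith
  -- the deviation from the linear segment halves under doubling
  have hbound : ∀ n : ℕ, ∀ t ∈ Set.Icc (0:ℝ) 1,
      ‖σ x y t - ((1 - t) • x + t • y)‖ ≤ 2 * ‖x - y‖ / 2 ^ n := by
    intro n
    induction n with
    | zero =>
      intro t ht
      have hd := dist_triangle (σ x y t) x ((1 - t) • x + t • y)
      rw [dist_eq_norm, dist_eq_norm, dist_eq_norm] at hd
      have h1 : ‖σ x y t - x‖ = t * ‖x - y‖ := by
        have := hgeo x y t ht 0 ⟨le_refl 0, zero_le_one⟩
        rw [hc0, sub_zero, abs_of_nonneg ht.1] at this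
        exact this
      have h2 : x - ((1 - t) • x + t • y) = t • (x - y) := by module
      rw [h1, h2, norm_smul, Real.norm_eq_abs, abs_of_nonneg ht.1] at hd
      have hxy : (0:ℝ) ≤ ‖x - y‖ := norm_nonneg _
      have ht1 : t ≤ 1 := ht.2
      calc ‖σ x y t - ((1 - t) • x + t • y)‖ ≤ t * ‖x - y‖ + t * ‖x - y‖ := hd
        _ ≤ 1 * ‖x - y‖ + 1 * ‖x - y‖ := by
            have := mul_le_mul_of_nonneg_right ht1 hxy
            linarith
        _ = 2 * ‖x - y‖ / 2 ^ 0 := by ring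
    | succ n ih =>
      intro t ht
      rcases le_or_gt t (1/2) with h | h
      · have h2t : 2 * t ∈ Set.Icc (0:ℝ) 1 := ⟨by have := ht.1; linarith, by linarith⟩
        have hm := hmid 0 ⟨le_refl 0, zero_le_one⟩ (2 * t) h2t
        rw [hc0, show (0 + 2 * t) / 2 = t by ring] at hm
        have hsub : σ x y (2 * t) = σ x y t + σ x y t - x := by
          rw [← hm]; abel
        have key : σ x y t - ((1 - t) • x + t • y)
            = (1/2 : ℝ) • (σ x y (2 * t) - ((1 - 2 * t) • x + (2 * t) • y)) := by
          rw [hsub]; module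
        calc ‖σ x y t - ((1 - t) • x + t • y)‖
            = (1/2) * ‖σ x y (2 * t) - ((1 - 2 * t) • x + (2 * t) • y)‖ := by
              rw [key, norm_smul]; norm_num
          _ ≤ (1/2) * (2 * ‖x - y‖ / 2 ^ n) := by
              have := ih (2 * t) h2t
              nlinarith [norm_nonneg (σ x y (2 * t) - ((1 - 2 * t) • x + (2 * t) • y))]
          _ = 2 * ‖x - y‖ / 2 ^ (n + 1) := by ring
      · have h2t : 2 * t - 1 ∈ Set.Icc (0:ℝ) 1 := ⟨by linarith, by have := ht.2; linarith⟩
        have hm := hmid (2 * t - 1) h2t 1 ⟨zero_le_one, le_refl 1⟩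
        rw [hc1, show (2 * t - 1 + 1) / 2 = t by ring] at hm
        have hsub : σ x y (2 * t - 1) = σ x y t + σ x y t - y := by
          rw [← hm]; abel
        have key : σ x y t - ((1 - t) • x + t • y)
            = (1/2 : ℝ) • (σ x y (2 * t - 1) - ((1 - (2 * t - 1)) • x + (2 * t - 1) • y)) := by
          rw [hsub]; module
        calc ‖σ x y t - ((1 - t) • x + t • y)‖
            = (1/2) * ‖σ x y (2 * t - 1) - ((1 - (2 * t - 1)) • x + (2 * t - 1) • y)‖ := by
              rw [key, norm_smul]; norm_num
          _ ≤ (1/2) * (2 * ‖x - y‖ / 2 ^ n) := by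
              have := ih (2 * t - 1) h2t
              nlinarith [norm_nonneg (σ x y (2 * t - 1) - ((1 - (2 * t - 1)) • x + (2 * t - 1) • y))]
          _ = 2 * ‖x - y‖ / 2 ^ (n + 1) := by ring
  intro t ht
  have htend : Tendsto (fun n : ℕ => 2 * ‖x - y‖ / 2 ^ n) atTop (nhds 0) := by
    have h1 : Tendsto (fun n : ℕ => (2 * ‖x - y‖) * (1/2 : ℝ) ^ n) atTop (nhds 0) := by
      simpa using (tendsto_pow_atTop_nhds_zero_of_lt_one
        (by norm_num : (0:ℝ) ≤ 1/2) (by norm_num : (1/2 : ℝ) < 1)).const_mul (2 * ‖x - y‖)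
    convert h1 using 2 with n
    rw [div_pow]
    ring
  have hle : ‖σ x y t - ((1 - t) • x + t • y)‖ ≤ 0 :=
    ge_of_tendsto htend (Filter.Eventually.of_forall fun n => hbound n t ht)
  exact sub_eq_zero.mp (norm_le_zero_iff.mp hle)
end

section
/- Let X be a real Banach space, let x, y ∈ X, t ∈ [0,1], and suppose p ∈ X satisfies ‖p − z‖ ≤ (1−t)·‖x − z‖ + t·‖y − z‖ for all z ∈ X. Then p = (1−t)x + t y. -/
open Filter Set

/-- Auxiliary: the finite-dimensional case of the Gähler–Murphy theorem. -/
theorem gaehler_murphy_findim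
    {E : Type*} [NormedAddCommGroup E] [NormedSpace ℝ E] [FiniteDimensional ℝ E]
    (x y p : E) (t : ℝ)
    (h : ∀ z : E, ‖p - z‖ ≤ (1 - t) * ‖x - z‖ + t * ‖y - z‖) :
    p = (1 - t) • x + t • y := by
  by_contra hne
  set c : E := p - ((1 - t) • x + t • y) with hc
  have hc0 : c ≠ 0 := sub_ne_zero.mpr hne
  have hcpos : 0 < ‖c‖ := norm_pos_iff.mpr hc0
  -- pick a point `m` close to `c` where the norm is differentiable
  obtain ⟨m, hm, hdiff⟩ : ∃ m ∈ Metric.ball c (‖c‖ / 2), DifferentiableAt ℝ (‖·‖) m := by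
    have hd := dense_differentiableAt_norm (E := E)
    rcases hd.exists_mem_open Metric.isOpen_ball
      ⟨c, Metric.mem_ball_self (show (0:ℝ) < ‖c‖/2 by linarith)⟩ with ⟨m, hm1, hm2⟩
    exact ⟨m, hm2, hm1⟩
  set g : E →L[ℝ] ℝ := fderiv ℝ (‖·‖) m with hg
  have hfd : HasFDerivAt (‖·‖) g m := hdiff.hasFDerivAt
  -- directional derivative of `ε ↦ ‖m + ε • v‖` at `0` is `g v`
  have hdv : ∀ v : E, HasDerivAt (fun ε : ℝ => ‖m + ε • v‖) (g v) 0 := by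
    intro v
    have hline : HasDerivAt (fun ε : ℝ => m + ε • v) v 0 := by
      simpa using ((hasDerivAt_id (0 : ℝ)).smul_const v).const_add m
    have hfd' : HasFDerivAt (‖·‖) g ((fun ε : ℝ => m + ε • v) 0) := by
      simpa using hfd
    exact hfd'.comp_hasDerivAt 0 hline
  -- one-sided derivative bound: derivative at 0 of a function nonneg on `Ioi 0`
  -- with value 0 at 0 is nonneg
  have onesided : ∀ (F : ℝ → ℝ) (L : ℝ), HasDerivAt F L 0 → F 0 = 0 →
      (∀ ε : ℝ, 0 < ε → 0 ≤ F ε) → 0 ≤ L := by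
    intro F L hF hF0 hFpos
    have h1 : HasDerivWithinAt F L (Ioi (0 : ℝ)) 0 := hF.hasDerivWithinAt
    rw [hasDerivWithinAt_iff_tendsto_slope] at h1
    have hIo : (Ioi (0 : ℝ)) \ {0} = Ioi (0 : ℝ) := by
      apply diff_singleton_eq_self; exact notMem_Ioi.2 le_rfl
    rw [hIo] at h1
    refine ge_of_tendsto h1 ?_
    filter_upwards [self_mem_nhdsWithin] with ε (hε : 0 < ε)
    rw [slope_def_field]
    have := hFpos ε hε
    apply div_nonneg (by simpa [hF0] using this) (by simpa using hε.le)
  -- `g v ≤ ‖v‖` for every `v`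
  have gle : ∀ v : E, g v ≤ ‖v‖ := by
    intro v
    have hF : HasDerivAt (fun ε : ℝ => ‖v‖ * ε - (‖m + ε • v‖ - ‖m‖)) (‖v‖ - g v) 0 := by
      have h1 : HasDerivAt (fun ε : ℝ => ‖v‖ * ε) ‖v‖ 0 := by
        simpa using (hasDerivAt_id (0 : ℝ)).const_mul ‖v‖
      have h2 : HasDerivAt (fun ε : ℝ => ‖m + ε • v‖ - ‖m‖) (g v) 0 := (hdv v).sub_const _
      exact h1.sub h2
    have := onesided _ _ hF (by simp) ?_
    · linarith
    · intro ε hε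
      have : ‖m + ε • v‖ ≤ ‖m‖ + ε * ‖v‖ := by
        calc ‖m + ε • v‖ ≤ ‖m‖ + ‖ε • v‖ := norm_add_le _ _
        _ = ‖m‖ + ε * ‖v‖ := by rw [norm_smul, Real.norm_of_nonneg hε.le]
      nlinarith
  -- `g m = ‖m‖`
  have gm : g m = ‖m‖ := by
    have h1 : HasDerivAt (fun ε : ℝ => (1 + ε) * ‖m‖) ‖m‖ 0 := by
      simpa using ((hasDerivAt_id (0 : ℝ)).const_add 1).mul_const ‖m‖
    have h2 : (fun ε : ℝ => ‖m + ε • m‖) =ᶠ[nhds (0 : ℝ)] fun ε : ℝ => (1 + ε) * ‖m‖ := by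
      filter_upwards [Ioo_mem_nhds (by norm_num : (-1 : ℝ) < 0) (by norm_num : (0:ℝ) < 1)]
        with ε hε
      have : m + ε • m = (1 + ε) • m := by rw [add_smul, one_smul]
      rw [this, norm_smul, Real.norm_of_nonneg (by linarith [hε.1])]
    have h3 : HasDerivAt (fun ε : ℝ => ‖m + ε • m‖) ‖m‖ 0 := h1.congr_of_eventuallyEq h2
    exact (hdv m).unique h3
  -- the key inequality: `g p ≤ (1-t) g x + t g y`
  have key : g p ≤ (1 - t) * g x + t * g y := by
    have hF : HasDerivAt
        (fun ε : ℝ => (1 - t) * ‖m + ε • x‖ + t * ‖m + ε • y‖ - ‖m + ε • p‖)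
        ((1 - t) * g x + t * g y - g p) 0 :=
      (((hdv x).const_mul (1 - t)).add ((hdv y).const_mul t)).sub (hdv p)
    have h0 : (1 - t) * ‖m + (0:ℝ) • x‖ + t * ‖m + (0:ℝ) • y‖ - ‖m + (0:ℝ) • p‖ = 0 := by
      simp
      ring
    have hpos : ∀ ε : ℝ, 0 < ε →
        0 ≤ (1 - t) * ‖m + ε • x‖ + t * ‖m + ε • y‖ - ‖m + ε • p‖ := by
      intro ε hε
      have hz := h (-(ε⁻¹ • m))
      have hw : ∀ w : E, ‖m + ε • w‖ = ε * ‖w - (-(ε⁻¹ • m))‖ := by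
        intro w
        have hrw : m + ε • w = ε • (w - -(ε⁻¹ • m)) := by
          rw [sub_neg_eq_add, smul_add, smul_smul, mul_inv_cancel₀ hε.ne', one_smul, add_comm]
        rw [hrw, norm_smul, Real.norm_of_nonneg hε.le]
      rw [hw x, hw y, hw p]
      have := mul_le_mul_of_nonneg_left hz hε.le
      nlinarith [this]
    have := onesided _ _ hF h0 hpos
    linarith
  -- conclude: `g c ≤ 0` but also `g c > 0`, contradiction
  have hgc : g c ≤ 0 := by
    have : g c = g p - ((1 - t) * g x + t * g y) := by
      rw [hc]; simp [map_sub, map_add, map_smul]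
    rw [this]; linarith
  have hgc2 : 0 < g c := by
    have h1 : g (m - c) ≤ ‖m - c‖ := gle (m - c)
    have h2 : g c = g m - g (m - c) := by simp [map_sub]
    have h3 : ‖m - c‖ < ‖c‖ / 2 := by
      have := hm; rw [Metric.mem_ball, dist_eq_norm] at this; exact this
    have h4 : ‖c‖ - ‖m - c‖ ≤ ‖m‖ := by
      have := norm_sub_norm_le c m
      have h5 : ‖c - m‖ = ‖m - c‖ := norm_sub_rev c m
      linarith
    rw [h2, gm]
    linarith
  linarith

/-- Gähler–Murphy: in a real Banach space, if `‖p - z‖ ≤ (1-t)‖x - z‖ + t‖y - z‖` for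
every `z`, then `p = (1-t)x + ty`. -/
theorem gaehler_murphy
    {X : Type*} [NormedAddCommGroup X] [NormedSpace ℝ X] [CompleteSpace X]
    (x y p : X) (t : ℝ) (ht : t ∈ Set.Icc (0 : ℝ) 1)
    (h : ∀ z : X, ‖p - z‖ ≤ (1 - t) * ‖x - z‖ + t * ‖y - z‖) :
    p = (1 - t) • x + t • y := by
  set S : Submodule ℝ X := Submodule.span ℝ {x, y, p} with hS
  haveI : FiniteDimensional ℝ S :=
    FiniteDimensional.span_of_finite ℝ (Set.toFinite _)
  have hxS : x ∈ S := Submodule.subset_span (by simp)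
  have hyS : y ∈ S := Submodule.subset_span (by simp)
  have hpS : p ∈ S := Submodule.subset_span (by simp)
  set xS : S := ⟨x, hxS⟩
  set yS : S := ⟨y, hyS⟩
  set pS : S := ⟨p, hpS⟩
  have h' : ∀ z : S, ‖pS - z‖ ≤ (1 - t) * ‖xS - z‖ + t * ‖yS - z‖ := by
    intro z
    have := h (z : X)
    simpa [Submodule.coe_norm] using this
  have := gaehler_murphy_findim xS yS pS t h'
  have hcoe : ((pS : X)) = (((1 - t) • xS + t • yS : S) : X) := by rw [this]
  simpa using hcoe
end

section
/- Let X and Y be real Banach spaces and let U : X → Y be a continuous map which is locally affine, i.e. for every x₀ ∈ X there exists ε > 0 such that U((1−t)x₁ + t x₂) = (1−t)U(x₁) + t U(x₂) for all x₁, x₂ in the closed ball B(x₀, ε) and all t ∈ [0,1]. Then U is globally affine: U((1−t)x + t y) = (1−t)U(x) + t U(y) for all x, y ∈ X and all t ∈ [0,1]. -/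
/-- A continuous, locally affine map between real Banach spaces is globally affine. -/
theorem locally_affine_is_affine
    {X Y : Type*} [NormedAddCommGroup X] [NormedSpace ℝ X] [CompleteSpace X]
    [NormedAddCommGroup Y] [NormedSpace ℝ Y] [CompleteSpace Y]
    (U : X → Y) (hcont : Continuous U)
    (hloc : ∀ x₀ : X, ∃ ε > (0 : ℝ),
      ∀ x₁ ∈ Metric.closedBall x₀ ε, ∀ x₂ ∈ Metric.closedBall x₀ ε,
        ∀ t ∈ Set.Icc (0 : ℝ) 1,
          U ((1 - t) • x₁ + t • x₂) = (1 - t) • U x₁ + t • U x₂) :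
    ∀ x y : X, ∀ t ∈ Set.Icc (0 : ℝ) 1,
      U ((1 - t) • x + t • y) = (1 - t) • U x + t • U y := by
  intro x y t ht
  set v : X := y - x with hv
  set g : ℝ → Y := fun s => U (x + s • v) with hg
  -- Local affineness of g along the line, and local derivative data.
  have key : ∀ s : ℝ, ∃ δ > (0:ℝ), ∃ c : Y, ∀ u ∈ Set.Ioo (s - δ) (s + δ),
      HasDerivAt g c u := by
    intro s
    obtain ⟨ε, hε, haff⟩ := hloc (x + s • v)
    set δ : ℝ := ε / (‖v‖ + 1) with hδ
    have hδpos : 0 < δ := div_pos hε (by positivity)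
    have hmem : ∀ u : ℝ, |u - s| ≤ δ → x + u • v ∈ Metric.closedBall (x + s • v) ε := by
      intro u hu
      rw [Metric.mem_closedBall, dist_eq_norm]
      have : x + u • v - (x + s • v) = (u - s) • v := by
        rw [sub_smul]; abel
      rw [this, norm_smul, Real.norm_eq_abs]
      calc |u - s| * ‖v‖ ≤ δ * (‖v‖ + 1) := by
            apply mul_le_mul hu (by linarith [norm_nonneg v]) (norm_nonneg v) hδpos.le
        _ = ε := by rw [hδ]; exact div_mul_cancel₀ ε (by positivity)
    -- g agrees on [s-δ, s+δ] with the affine map A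
    set a : ℝ := s - δ
    set b : ℝ := s + δ
    set d : Y := g b - g a with hd
    set A : ℝ → Y := fun u => g a + ((u - a) * (2 * δ)⁻¹) • d with hA
    have hgA : ∀ u ∈ Set.Icc a b, g u = A u := by
      intro u hu
      set τ : ℝ := (u - a) * (2 * δ)⁻¹ with hτ
      have hτ01 : τ ∈ Set.Icc (0:ℝ) 1 := by
        constructor
        · apply mul_nonneg (by linarith [hu.1]) (by positivity)
        · rw [hτ]
          rw [mul_inv_le_iff₀ (by positivity)]
          simp only [a, b] at hu ⊢
          linarith [hu.2]
      have hcomb : (1 - τ) * a + τ * b = u := by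
        have h2δ : (2 * δ) ≠ 0 := by positivity
        rw [hτ]; simp only [a, b]
        linear_combination (u - (s - δ)) * (inv_mul_cancel₀ h2δ)
      have h1 : x + a • v ∈ Metric.closedBall (x + s • v) ε := hmem a (by simp [a, abs_of_nonpos, hδpos.le])
      have h2 : x + b • v ∈ Metric.closedBall (x + s • v) ε := hmem b (by simp [b, abs_of_nonneg, hδpos.le])
      have := haff _ h1 _ h2 τ hτ01
      show g u = g a + ((u - a) * (2 * δ)⁻¹) • d
      rw [← hτ, hd]
      clear_value τ a b
      have hx : (1 - τ) • (x + a • v) + τ • (x + b • v) = x + u • v := by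
        rw [← hcomb]
        match_scalars <;> ring
      rw [hx] at this
      show U (x + u • v) = U (x + a • v) + τ • (U (x + b • v) - U (x + a • v))
      rw [this]; module
    -- A has constant derivative
    refine ⟨δ, hδpos, (1 * (2 * δ)⁻¹) • d, fun u hu => ?_⟩
    have hAderiv : HasDerivAt A ((1 * (2 * δ)⁻¹) • d) u :=
      ((((hasDerivAt_id u).sub_const a).mul_const ((2 * δ)⁻¹)).smul_const d).const_add (g a)
    apply hAderiv.congr_of_eventuallyEq
    exact Filter.eventuallyEq_of_mem (Ioo_mem_nhds hu.1 hu.2)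
      (fun w hw => hgA w ⟨hw.1.le, hw.2.le⟩)
  -- g is differentiable with locally constant derivative
  have hdiff : ∀ s : ℝ, HasDerivAt g (deriv g s) s := by
    intro s
    obtain ⟨δ, hδ, c, h⟩ := key s
    have := h s ⟨by linarith, by linarith⟩
    rwa [this.deriv]
  have hlc : IsLocallyConstant (deriv g) := by
    rw [IsLocallyConstant.iff_exists_open]
    intro s
    obtain ⟨δ, hδ, c, h⟩ := key s
    refine ⟨Set.Ioo (s - δ) (s + δ), isOpen_Ioo, ⟨by linarith, by linarith⟩, fun w hw => ?_⟩
    rw [(h w hw).deriv, (h s ⟨by linarith, by linarith⟩).deriv]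
  set c : Y := deriv g 0 with hc
  have hderiv_const : ∀ s : ℝ, deriv g s = c :=
    fun s => hlc.apply_eq_of_preconnectedSpace s 0
  -- h := g - (· • c) has zero derivative, hence constant
  have hconst : ∀ s : ℝ, g s - s • c = g 0 - (0:ℝ) • c := by
    have hd : Differentiable ℝ (fun s : ℝ => g s - s • c) := by
      intro s
      exact ((hdiff s).sub ((hasDerivAt_id s).smul_const c)).differentiableAt
    have hd0 : ∀ s : ℝ, deriv (fun s : ℝ => g s - s • c) s = 0 := by
      intro s
      have h1 : HasDerivAt (fun s : ℝ => g s - s • c) (deriv g s - (1:ℝ) • c) s :=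
        (hdiff s).sub (by simpa using (hasDerivAt_id s).smul_const c)
      rw [h1.deriv, hderiv_const, one_smul, sub_self]
    exact fun s => is_const_of_deriv_eq_zero hd hd0 s 0
  have hgs : ∀ s : ℝ, g s = g 0 + s • c := by
    intro s
    have := hconst s
    simp only [zero_smul, sub_zero] at this
    rw [← this]; abel
  -- conclude
  have hx0 : ∀ s : ℝ, (1 - s) • x + s • y = x + s • v := by
    intro s
    rw [hv, smul_sub, sub_smul, one_smul]
    abel
  have hU : ∀ s : ℝ, U ((1 - s) • x + s • y) = g s := fun s => by rw [hx0, hg]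
  rw [hU t]
  have hUx : U x = g 0 := by rw [hg]; simp
  have hUy : U y = g 1 := by
    rw [hg]; simp [hv]
  rw [hUx, hUy, hgs t, hgs 1, one_smul]
  module
end

section
/- Let X and Y be real Banach spaces and let U : X → Y be a local isometry, i.e. every x ∈ X has an open neighborhood V such that U restricted to V is a distance-preserving map onto an open subset of Y. Then U is a homeomorphism: U is bijective, continuous, and U⁻¹ is continuous. -/
open Set Metric

set_option maxHeartbeats 1000000

namespace LocalIsometryHomeo

variable {X Y : Type*} [NormedAddCommGroup X] [NormedSpace ℝ X]
    [NormedAddCommGroup Y] [NormedSpace ℝ Y]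

def Good (U : X → Y) (V : X → Set X) : Prop :=
  (∀ x, IsOpen (V x)) ∧ (∀ x, x ∈ V x) ∧
    (∀ x, ∀ u ∈ V x, ∀ v ∈ V x, ‖U u - U v‖ = ‖u - v‖) ∧ ∀ x, IsOpen (U '' V x)

variable {U : X → Y} {V : X → Set X}

theorem Good.inj (h : Good U V) (w : X) {u v : X} (hu : u ∈ V w) (hv : v ∈ V w)
    (huv : U u = U v) : u = v := by
  have h2 := h.2.2.1 w u hu v hv
  rw [huv, sub_self, norm_zero] at h2
  exact sub_eq_zero.mp (norm_eq_zero.mp h2.symm)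

theorem Good.cont (h : Good U V) : Continuous U := by
  rw [Metric.continuous_iff]
  intro x ε hε
  obtain ⟨δ, hδ, hball⟩ := Metric.isOpen_iff.1 (h.1 x) x (h.2.1 x)
  refine ⟨min δ ε, lt_min hδ hε, fun u hu => ?_⟩
  have hu' : u ∈ V x := hball (lt_of_lt_of_le hu (min_le_left _ _))
  have h2 := h.2.2.1 x u hu' x (h.2.1 x)
  rw [dist_eq_norm, h2, ← dist_eq_norm]
  exact lt_of_lt_of_le hu (min_le_right _ _)

theorem Good.norm_le (h : Good U V) (x y : X) : ‖U y - U x‖ ≤ ‖y - x‖ := by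
  set c : ℝ → X := fun t => x + t • (y - x) with hc
  have hcont : Continuous c := by
    apply continuous_const.add (continuous_id.smul continuous_const)
  have key : Icc (0:ℝ) 1 ⊆ {t | ‖U (c t) - U x‖ ≤ t * ‖y - x‖} := by
    apply IsClosed.Icc_subset_of_forall_exists_gt
    · have h1 : Continuous fun t => ‖U (c t) - U x‖ :=
        ((h.cont.comp hcont).sub continuous_const).norm
      have h2 : Continuous fun t : ℝ => t * ‖y - x‖ :=
        continuous_id.mul continuous_const
      exact (isClosed_le h1 h2).inter isClosed_Icc
    · show ‖U (c 0) - U x‖ ≤ 0 * ‖y - x‖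
      simp [hc]
    · rintro t ⟨ht, ht0, ht1⟩ z hz
      obtain ⟨δ, hδ, hball⟩ := Metric.isOpen_iff.1 (h.1 (c t)) (c t) (h.2.1 (c t))
      have hcc : Continuous fun s : ℝ => dist (c s) (c t) := by
        apply Continuous.dist hcont continuous_const
      have hne : (0:ℝ) < min (min (z - t) (1 - t)) (δ / (‖y - x‖ + 1)) := by
        apply lt_min (lt_min (by linarith [mem_Ioi.mp hz]) (by linarith)) (by positivity)
      set e := min (min (z - t) (1 - t)) (δ / (‖y - x‖ + 1)) with he
      set t' := t + e / 2 with ht'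
      have hctV : c t' ∈ V (c t) := by
        apply hball
        have : c t' - c t = (e / 2) • (y - x) := by
          simp only [hc, ht']
          rw [add_sub_add_left_eq_sub, ← sub_smul]
          ring_nf
        rw [mem_ball, dist_eq_norm, this, norm_smul, Real.norm_eq_abs,
          abs_of_nonneg (by linarith)]
        have h1 : e / 2 ≤ δ / (‖y - x‖ + 1) / 2 := by
          have := min_le_right (min (z - t) (1 - t)) (δ / (‖y - x‖ + 1))
          linarith
        have h2 : e / 2 * ‖y - x‖ ≤ δ / (‖y - x‖ + 1) / 2 * (‖y - x‖ + 1) := by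
          apply mul_le_mul h1 (by linarith [norm_nonneg (y - x)]) (norm_nonneg _) (by positivity)
        have h3 : δ / (‖y - x‖ + 1) / 2 * (‖y - x‖ + 1) = δ / 2 := by
          field_simp
        rw [h3] at h2
        linarith
      refine ⟨t', ?_, ?_, ?_⟩
      · show ‖U (c t') - U x‖ ≤ t' * ‖y - x‖
        have hiso := h.2.2.1 (c t) (c t') hctV (c t) (h.2.1 (c t))
        have hdiff : c t' - c t = (e / 2) • (y - x) := by
          simp only [hc, ht']
          rw [add_sub_add_left_eq_sub, ← sub_smul]
          ring_nf
        calc ‖U (c t') - U x‖ ≤ ‖U (c t') - U (c t)‖ + ‖U (c t) - U x‖ :=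
              norm_sub_le_norm_sub_add_norm_sub _ _ _
          _ ≤ ‖c t' - c t‖ + t * ‖y - x‖ := by
              rw [hiso]
              have ht' : ‖U (c t) - U x‖ ≤ t * ‖y - x‖ := ht
              linarith
          _ = (e / 2) * ‖y - x‖ + t * ‖y - x‖ := by
              rw [hdiff, norm_smul, Real.norm_eq_abs, abs_of_nonneg (by linarith)]
          _ = t' * ‖y - x‖ := by rw [ht']; ring
      · show t < t'
        rw [ht']; linarith
      · show t' ≤ z
        have h1 : e ≤ z - t := le_trans (min_le_left _ _) (min_le_left _ _)
        rw [ht']; linarith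
  have h1 := key (right_mem_Icc.mpr zero_le_one)
  simp only [mem_setOf_eq, hc, one_smul, one_mul] at h1
  rwa [add_sub_cancel] at h1

theorem Good.uniq (h : Good U V) {b : ℝ} {γ₁ γ₂ : ℝ → X}
    (h₁ : ContinuousOn γ₁ (Icc 0 b)) (h₂ : ContinuousOn γ₂ (Icc 0 b))
    (hU : ∀ t ∈ Icc (0:ℝ) b, U (γ₁ t) = U (γ₂ t)) (h0 : γ₁ 0 = γ₂ 0) :
    ∀ t ∈ Icc (0:ℝ) b, γ₁ t = γ₂ t := by
  have key : Icc (0:ℝ) b ⊆ {t | γ₁ t = γ₂ t} := by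
    apply IsClosed.Icc_subset_of_forall_exists_gt
    · have hcl := isClosed_Icc.isClosed_eq (f := γ₁) (g := γ₂) h₁ h₂
      have heq : {t | γ₁ t = γ₂ t} ∩ Icc 0 b = {t ∈ Icc (0:ℝ) b | γ₁ t = γ₂ t} := by
        ext t; exact ⟨fun ht => ⟨ht.2, ht.1⟩, fun ht => ⟨ht.2, ht.1⟩⟩
      rw [heq]; exact hcl
    · exact h0
    · rintro t ⟨ht, ht0, htb⟩ z hz
      simp only [mem_setOf_eq] at ht
      set w := γ₁ t with hw
      obtain ⟨δ, hδ, hball⟩ := Metric.isOpen_iff.1 (h.1 w) w (h.2.1 w)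
      have htmem : t ∈ Icc (0:ℝ) b := ⟨ht0, le_of_lt htb⟩
      obtain ⟨δ₁, hδ₁, hd1⟩ := (Metric.continuousWithinAt_iff).1 (h₁ t htmem) δ hδ
      obtain ⟨δ₂, hδ₂, hd2⟩ := (Metric.continuousWithinAt_iff).1 (h₂ t htmem) δ hδ
      set e := min (min (z - t) (b - t)) (min δ₁ δ₂) with he
      have hepos : 0 < e := by
        apply lt_min (lt_min (by linarith [mem_Ioi.mp hz]) (by linarith)) (lt_min hδ₁ hδ₂)
      set t' := t + e / 2 with ht'
      have ht'mem : t' ∈ Icc (0:ℝ) b := by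
        constructor
        · rw [ht']; linarith
        · have : e ≤ b - t := le_trans (min_le_left _ _) (min_le_right _ _)
          rw [ht']; linarith
      have hdist : dist t' t < min δ₁ δ₂ := by
        rw [Real.dist_eq, ht', add_sub_cancel_left, abs_of_pos (by linarith)]
        have h1 : e ≤ min δ₁ δ₂ := min_le_right _ _
        linarith
      have hg1 : γ₁ t' ∈ V w :=
        hball (mem_ball.mpr (hd1 ht'mem (lt_of_lt_of_le hdist (min_le_left _ _))))
      have hg2 : γ₂ t' ∈ V w := by
        have := hd2 ht'mem (lt_of_lt_of_le hdist (min_le_right _ _))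
        rw [← ht] at this
        exact hball (mem_ball.mpr this)
      refine ⟨t', h.inj w hg1 hg2 (hU t' ht'mem), ?_, ?_⟩
      · show t < t'
        rw [ht']; linarith
      · have h1 : e ≤ z - t := le_trans (min_le_left _ _) (min_le_left _ _)
        rw [ht']; linarith
  exact fun t htt => key htt

theorem contOn_of_lip {E : Type*} [NormedAddCommGroup E] {γ : ℝ → E} {K b c : ℝ}
    (hl : ∀ s ∈ Icc c b, ∀ s' ∈ Icc c b, ‖γ s - γ s'‖ ≤ K * |s - s'|) :
    ContinuousOn γ (Icc c b) := by
  intro t ht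
  rw [Metric.continuousWithinAt_iff]
  intro ε hε
  refine ⟨ε / (|K| + 1), by positivity, fun s hs hdd => ?_⟩
  rw [dist_eq_norm]
  have h2 : |s - t| < ε / (|K| + 1) := by rwa [Real.dist_eq] at hdd
  calc ‖γ s - γ t‖ ≤ K * |s - t| := hl s hs t ht
    _ ≤ |K| * |s - t| := mul_le_mul_of_nonneg_right (le_abs_self K) (abs_nonneg _)
    _ < ε := by
        have h3 : |K| * |s - t| ≤ (|K| + 1) * |s - t| := by
          nlinarith [abs_nonneg (s - t), abs_nonneg K]
        have h4 : (|K| + 1) * |s - t| < (|K| + 1) * (ε / (|K| + 1)) :=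
          mul_lt_mul_of_pos_left h2 (by positivity)
        have h5 : (|K| + 1) * (ε / (|K| + 1)) = ε := by field_simp
        linarith

theorem Good.lift [CompleteSpace X] (h : Good U V) (x : X) (y₁ : Y) :
    ∃ γ : ℝ → X, γ 0 = x ∧
      (∀ s ∈ Icc (0:ℝ) 1, ∀ s' ∈ Icc (0:ℝ) 1, ‖γ s - γ s'‖ ≤ ‖y₁ - U x‖ * |s - s'|) ∧
      ∀ s ∈ Icc (0:ℝ) 1, U (γ s) = U x + s • (y₁ - U x) := by
  set d := ‖y₁ - U x‖ with hd
  have hd0 : 0 ≤ d := norm_nonneg _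
  set σ : ℝ → Y := fun t => U x + t • (y₁ - U x) with hσ
  have hσcont : Continuous σ := continuous_const.add (continuous_id.smul continuous_const)
  have hσnorm : ∀ s t : ℝ, ‖σ s - σ t‖ = |s - t| * d := by
    intro s t
    have h1 : σ s - σ t = (s - t) • (y₁ - U x) := by
      simp only [hσ]
      rw [add_sub_add_left_eq_sub, ← sub_smul]
    rw [h1, norm_smul, Real.norm_eq_abs, hd]
  set P : ℝ → (ℝ → X) → Prop := fun t γ => γ 0 = x ∧
      (∀ s ∈ Icc (0:ℝ) t, ∀ s' ∈ Icc (0:ℝ) t, ‖γ s - γ s'‖ ≤ d * |s - s'|) ∧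
      (∀ s ∈ Icc (0:ℝ) t, U (γ s) = σ s) with hP
  set S : Set ℝ := {t | t ∈ Icc (0:ℝ) 1 ∧ ∃ γ, P t γ} with hS
  have h0S : (0:ℝ) ∈ S := by
    refine ⟨⟨le_refl 0, zero_le_one⟩, fun _ => x, rfl, ?_, ?_⟩
    · intro s hs s' hs'
      have e1 : s = 0 := le_antisymm hs.2 hs.1
      have e2 : s' = 0 := le_antisymm hs'.2 hs'.1
      simp [e1, e2]
    · intro s hs
      have e1 : s = 0 := le_antisymm hs.2 hs.1
      simp [e1, hσ]
  have hSbdd : BddAbove S := ⟨1, fun t ht => ht.1.2⟩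
  have hSdown : ∀ t ∈ S, ∀ u, 0 ≤ u → u ≤ t → u ∈ S := by
    rintro t ⟨ht1, γ, hγ⟩ u hu0 hut
    refine ⟨⟨hu0, le_trans hut ht1.2⟩, γ, hγ.1, ?_, ?_⟩
    · intro s hs s' hs'
      exact hγ.2.1 s ⟨hs.1, le_trans hs.2 hut⟩ s' ⟨hs'.1, le_trans hs'.2 hut⟩
    · intro s hs
      exact hγ.2.2 s ⟨hs.1, le_trans hs.2 hut⟩
  have hchoice : ∀ t ∈ S, ∃ γ, P t γ := fun t ht => ht.2
  choose! γf hγf using hchoice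
  set s₀ := sSup S with hs₀
  have hs₀0 : 0 ≤ s₀ := le_csSup hSbdd h0S
  have hs₀1 : s₀ ≤ 1 := csSup_le ⟨0, h0S⟩ (fun t ht => ht.1.2)
  have hIco : ∀ t, 0 ≤ t → t < s₀ → t ∈ S := by
    intro t ht0 hts
    obtain ⟨u, huS, htu⟩ := exists_lt_of_lt_csSup ⟨0, h0S⟩ hts
    exact hSdown u huS t ht0 (le_of_lt htu)
  have hcoh : ∀ t ∈ S, ∀ u ∈ S, t ≤ u → ∀ s ∈ Icc (0:ℝ) t, γf u s = γf t s := by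
    intro t htS u huS htu
    have h1 := hγf t htS
    have h2 := hγf u huS
    have hsub : Icc (0:ℝ) t ⊆ Icc 0 u := Icc_subset_Icc_right htu
    exact h.uniq
      (contOn_of_lip (fun s hs s' hs' => h2.2.1 s (hsub hs) s' (hsub hs')))
      (contOn_of_lip h1.2.1)
      (fun s hs => by rw [h2.2.2 s (hsub hs), h1.2.2 s hs])
      (by rw [h2.1, h1.1])
  set g : ℝ → X := fun t => γf t t with hg
  have hglip : ∀ t ∈ S, ∀ u ∈ S, t ≤ u → ‖g t - g u‖ ≤ d * |t - u| := by
    intro t htS u huS htu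
    have e1 : γf t t = γf u t := (hcoh t htS u huS htu t ⟨htS.1.1, le_refl t⟩).symm
    show ‖γf t t - γf u u‖ ≤ d * |t - u|
    rw [e1]
    exact (hγf u huS).2.1 t ⟨htS.1.1, htu⟩ u ⟨huS.1.1, le_refl u⟩
  have hgU : ∀ t ∈ S, U (g t) = σ t := fun t ht =>
    (hγf t ht).2.2 t ⟨ht.1.1, le_refl t⟩
  have hg0 : g 0 = x := (hγf 0 h0S).1
  -- s₀ ∈ S
  have hs₀S : s₀ ∈ S := by
    rcases eq_or_lt_of_le hs₀0 with heq | hpos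
    · rw [← heq]; exact h0S
    · set tn : ℕ → ℝ := fun n => s₀ - s₀ * (1 / ((n : ℝ) + 1)) with htn
      have htn0 : ∀ n, 0 ≤ tn n := by
        intro n
        have h1 : s₀ * (1 / ((n : ℝ) + 1)) ≤ s₀ * 1 := by
          apply mul_le_mul_of_nonneg_left _ hs₀0
          rw [div_le_one (by positivity)]
          simp [Nat.one_le_cast]
        simp only [htn]
        nlinarith
      have htnlt : ∀ n, tn n < s₀ := by
        intro n
        have : 0 < s₀ * (1 / ((n : ℝ) + 1)) := by positivity
        simp only [htn]; linarith
      have htnS : ∀ n, tn n ∈ S := fun n => hIco (tn n) (htn0 n) (htnlt n)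
      have htnlim : Filter.Tendsto tn Filter.atTop (nhds s₀) := by
        have h1 : Filter.Tendsto (fun n : ℕ => 1 / ((n : ℝ) + 1)) Filter.atTop (nhds 0) :=
          tendsto_one_div_add_atTop_nhds_zero_nat
        have h2 := (h1.const_mul s₀).const_sub s₀
        rw [htn]
        simpa [one_div] using h2
      have hcauchy : CauchySeq (fun n => g (tn n)) := by
        rw [Metric.cauchySeq_iff]
        intro ε hε
        obtain ⟨N, hN⟩ := exists_nat_gt (d * s₀ / ε)
        refine ⟨N, fun m hm n hn => ?_⟩
        have hbound : ∀ k, N ≤ k → s₀ - s₀ * (1 / ((N:ℝ) + 1)) ≤ tn k ∧ tn k ≤ s₀ := by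
          intro k hk
          constructor
          · simp only [htn]
            have h1 : 1 / ((k:ℝ) + 1) ≤ 1 / ((N:ℝ) + 1) := by
              apply one_div_le_one_div_of_le (by positivity)
              have := (Nat.cast_le (α := ℝ)).mpr hk
              linarith
            nlinarith
          · exact le_of_lt (htnlt k)
        have e1 : s₀ - s₀ * (1 / ((N:ℝ) + 1)) ≤ tn m := (hbound m hm).1
        have e2 : tn m ≤ s₀ := (hbound m hm).2
        have e3 : s₀ - s₀ * (1 / ((N:ℝ) + 1)) ≤ tn n := (hbound n hn).1
        have e4 : tn n ≤ s₀ := (hbound n hn).2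
        have h3 : |tn m - tn n| ≤ s₀ * (1 / ((N:ℝ) + 1)) := by
          rw [abs_le]
          constructor
          · clear_value tn s₀
            linarith
          · clear_value tn s₀
            linarith
        rw [dist_eq_norm]
        rcases le_total (tn m) (tn n) with hc | hc
        · have h4 := hglip (tn m) (htnS m) (tn n) (htnS n) hc
          have h5 : d * |tn m - tn n| ≤ d * (s₀ * (1 / ((N:ℝ) + 1))) :=
            mul_le_mul_of_nonneg_left h3 hd0
          have h6 : d * s₀ < ε * ((N:ℝ) + 1) := by
            rw [div_lt_iff₀ hε] at hN
            nlinarith [Nat.cast_nonneg (α := ℝ) N, hε]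
          have h7 : d * (s₀ * (1 / ((N:ℝ) + 1))) < ε := by
            rw [mul_one_div, ← mul_div_assoc, div_lt_iff₀ (by positivity)]
            linarith
          linarith
        · have h4 := hglip (tn n) (htnS n) (tn m) (htnS m) hc
          rw [norm_sub_rev]
          have h5 : d * |tn n - tn m| ≤ d * (s₀ * (1 / ((N:ℝ) + 1))) := by
            rw [abs_sub_comm]
            exact mul_le_mul_of_nonneg_left h3 hd0
          have h6 : d * s₀ < ε * ((N:ℝ) + 1) := by
            rw [div_lt_iff₀ hε] at hN
            nlinarith [Nat.cast_nonneg (α := ℝ) N, hε]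
          have h7 : d * (s₀ * (1 / ((N:ℝ) + 1))) < ε := by
            rw [mul_one_div, ← mul_div_assoc, div_lt_iff₀ (by positivity)]
            linarith
          linarith
      obtain ⟨z, hz⟩ := cauchySeq_tendsto_of_complete hcauchy
      have hzbound : ∀ s, 0 ≤ s → s < s₀ → ‖g s - z‖ ≤ d * (s₀ - s) := by
        intro s hs0 hss
        have hlim : Filter.Tendsto (fun n => ‖g s - g (tn n)‖) Filter.atTop
            (nhds ‖g s - z‖) := (Filter.Tendsto.const_sub _ hz).norm
        apply le_of_tendsto hlim
        have hev : ∀ᶠ n in Filter.atTop, s < tn n :=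
          htnlim.eventually (eventually_gt_nhds hss)
        filter_upwards [hev] with n hn
        have h1 := hglip s (hIco s hs0 hss) (tn n) (htnS n) (le_of_lt hn)
        have h2 : |s - tn n| = tn n - s := by rw [abs_sub_comm, abs_of_pos (by linarith)]
        rw [h2] at h1
        have h3 : tn n ≤ s₀ := le_of_lt (htnlt n)
        nlinarith
      set γs : ℝ → X := fun s => if s < s₀ then g s else z with hγs
      have hγsU : ∀ s ∈ Icc (0:ℝ) s₀, U (γs s) = σ s := by
        intro s hs
        by_cases hc : s < s₀
        · simp only [hγs, if_pos hc]
          exact hgU s (hIco s hs.1 hc)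
        · have hse : s = s₀ := le_antisymm hs.2 (not_lt.1 hc)
          simp only [hγs, if_neg hc]
          have hUlim : Filter.Tendsto (fun n => U (g (tn n))) Filter.atTop (nhds (U z)) :=
            (h.cont.continuousAt.tendsto.comp hz)
          have hσlim : Filter.Tendsto (fun n => σ (tn n)) Filter.atTop (nhds (σ s₀)) :=
            (hσcont.continuousAt.tendsto.comp htnlim)
          have heq : (fun n => U (g (tn n))) = fun n => σ (tn n) := by
            funext n; exact hgU (tn n) (htnS n)
          rw [heq] at hUlim
          rw [hse]
          exact tendsto_nhds_unique hUlim hσlim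
      have hγslip : ∀ s ∈ Icc (0:ℝ) s₀, ∀ s' ∈ Icc (0:ℝ) s₀,
          ‖γs s - γs s'‖ ≤ d * |s - s'| := by
        have hkey : ∀ s ∈ Icc (0:ℝ) s₀, ∀ s' ∈ Icc (0:ℝ) s₀, s ≤ s' →
            ‖γs s - γs s'‖ ≤ d * |s - s'| := by
          intro s hs s' hs' hss'
          by_cases hc' : s' < s₀
          · have hc : s < s₀ := lt_of_le_of_lt hss' hc'
            simp only [hγs, if_pos hc, if_pos hc']
            exact hglip s (hIco s hs.1 hc) s' (hIco s' hs'.1 hc') hss'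
          · have hse' : s' = s₀ := le_antisymm hs'.2 (not_lt.1 hc')
            by_cases hc : s < s₀
            · simp only [hγs, if_pos hc, if_neg hc']
              have h1 := hzbound s hs.1 hc
              have h2 : |s - s'| = s₀ - s := by
                rw [hse', abs_sub_comm, abs_of_pos (by linarith)]
              rw [h2]; exact h1
            · have hse : s = s₀ := le_antisymm hs.2 (not_lt.1 hc)
              simp only [hγs, if_neg hc, if_neg hc', sub_self, norm_zero]
              positivity
        intro s hs s' hs'
        rcases le_total s s' with hc | hc
        · exact hkey s hs s' hs' hc
        · rw [norm_sub_rev, abs_sub_comm]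
          exact hkey s' hs' s hs hc
      have hγs0 : γs 0 = x := by
        simp only [hγs, if_pos hpos]
        exact hg0
      exact ⟨⟨hs₀0, hs₀1⟩, γs, hγs0, hγslip, hγsU⟩
  -- s₀ = 1
  have hs₀eq : s₀ = 1 := by
    by_contra hne
    have hlt : s₀ < 1 := lt_of_le_of_ne hs₀1 hne
    obtain ⟨_, γ, hγ0, hγlip, hγU⟩ := hs₀S
    set w := γ s₀ with hwdef
    obtain ⟨ρ, hρ, hball⟩ := Metric.isOpen_iff.1 (h.1 w) w (h.2.1 w)
    have hUw : U w = σ s₀ := hγU s₀ ⟨hs₀0, le_refl s₀⟩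
    have hσs₀mem : s₀ ∈ σ ⁻¹' (U '' V w) := by
      show σ s₀ ∈ U '' V w
      exact ⟨w, h.2.1 w, hUw⟩
    obtain ⟨δ₁, hδ₁, hball₁⟩ := Metric.isOpen_iff.1
      (hσcont.isOpen_preimage _ (h.2.2.2 w)) s₀ hσs₀mem
    set δe := min (δ₁ / 2) (1 - s₀) with hδe
    have hδepos : 0 < δe := lt_min (by linarith) (by linarith)
    set t₁ := s₀ + δe with ht₁
    have hw' : ∀ t ∈ Ioc s₀ t₁, ∃ v ∈ V w, U v = σ t := by
      intro t ht
      have : σ t ∈ U '' V w := by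
        apply hball₁
        rw [mem_ball, Real.dist_eq, abs_of_pos (by linarith [ht.1])]
        have h1 : t - s₀ ≤ δe := by linarith [ht.2]
        have h2 : δe ≤ δ₁ / 2 := min_le_left _ _
        linarith
      obtain ⟨v, hv, hUv⟩ := this
      exact ⟨v, hv, hUv⟩
    choose! w' hw'V hw'U using hw'
    set η := ρ / (d + 1) with hη
    have hηpos : 0 < η := by positivity
    have hγV : ∀ u ∈ Icc (0:ℝ) s₀, s₀ - η ≤ u → γ u ∈ V w := by
      intro u hu hu'
      apply hball
      rw [mem_ball, dist_eq_norm]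
      have h1 := hγlip u hu s₀ ⟨hs₀0, le_refl s₀⟩
      have h2 : |u - s₀| ≤ η := by
        rw [abs_sub_comm, abs_of_nonneg (by linarith [hu.2])]
        linarith [hu.2]
      have h3 : d * |u - s₀| ≤ d * η := mul_le_mul_of_nonneg_left h2 hd0
      have h4 : d * η < ρ := by
        rw [hη, ← mul_div_assoc, div_lt_iff₀ (by positivity)]
        nlinarith
      linarith
    have hcross : ∀ s ∈ Icc (0:ℝ) s₀, ∀ t ∈ Ioc s₀ t₁, ‖γ s - w' t‖ ≤ d * (t - s) := by
      intro s hs t ht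
      set u := max s (s₀ - η) with hu
      have hu1 : u ∈ Icc (0:ℝ) s₀ := by
        constructor
        · exact le_trans hs.1 (le_max_left _ _)
        · apply max_le hs.2 (by linarith)
      have hu2 : s₀ - η ≤ u := le_max_right _ _
      have hu3 : s ≤ u := le_max_left _ _
      have hγuV : γ u ∈ V w := hγV u hu1 hu2
      have hiso := h.2.2.1 w (γ u) hγuV (w' t) (hw'V t ht)
      have h1 : ‖γ s - w' t‖ ≤ ‖γ s - γ u‖ + ‖γ u - w' t‖ :=
        norm_sub_le_norm_sub_add_norm_sub _ _ _
      have h2 : ‖γ s - γ u‖ ≤ d * (u - s) := by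
        have := hγlip s hs u hu1
        rwa [abs_sub_comm, abs_of_nonneg (by linarith)] at this
      have h3 : ‖γ u - w' t‖ = (t - u) * d := by
        rw [← hiso, hγU u hu1, hw'U t ht, hσnorm, abs_sub_comm,
          abs_of_nonneg (by linarith [hu1.2, ht.1])]
      have h4 : u ≤ t := le_trans hu1.2 (le_of_lt ht.1)
      nlinarith
    have ht₁S : t₁ ∈ S := by
      refine ⟨⟨by linarith, by
        have : δe ≤ 1 - s₀ := min_le_right _ _
        rw [ht₁]; linarith⟩, fun s => if s ≤ s₀ then γ s else w' s, ?_, ?_, ?_⟩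
      · simp only [if_pos hs₀0]
        exact hγ0
      · have hkey : ∀ s ∈ Icc (0:ℝ) t₁, ∀ s' ∈ Icc (0:ℝ) t₁, s ≤ s' →
            ‖(if s ≤ s₀ then γ s else w' s) - (if s' ≤ s₀ then γ s' else w' s')‖
              ≤ d * |s - s'| := by
          intro s hs s' hs' hss'
          have habs : |s - s'| = s' - s := by
            rw [abs_sub_comm, abs_of_nonneg (by linarith)]
          rw [habs]
          by_cases hc : s ≤ s₀
          · by_cases hc' : s' ≤ s₀
            · simp only [if_pos hc, if_pos hc']
              have := hγlip s ⟨hs.1, hc⟩ s' ⟨hs'.1, hc'⟩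
              rwa [habs] at this
            · simp only [if_pos hc, if_neg hc']
              exact hcross s ⟨hs.1, hc⟩ s' ⟨not_le.1 hc', hs'.2⟩
          · by_cases hc' : s' ≤ s₀
            · exact absurd (le_trans hss' hc') hc
            · simp only [if_neg hc, if_neg hc']
              have hiso := h.2.2.1 w (w' s) (hw'V s ⟨not_le.1 hc, hs.2⟩)
                (w' s') (hw'V s' ⟨not_le.1 hc', hs'.2⟩)
              rw [← hiso, hw'U s ⟨not_le.1 hc, hs.2⟩, hw'U s' ⟨not_le.1 hc', hs'.2⟩,
                hσnorm, abs_sub_comm, abs_of_nonneg (by linarith)]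
              nlinarith
        intro s hs s' hs'
        rcases le_total s s' with hc | hc
        · exact hkey s hs s' hs' hc
        · rw [norm_sub_rev, abs_sub_comm]
          exact hkey s' hs' s hs hc
      · intro s hs
        by_cases hc : s ≤ s₀
        · simp only [if_pos hc]
          exact hγU s ⟨hs.1, hc⟩
        · simp only [if_neg hc]
          exact hw'U s ⟨not_le.1 hc, hs.2⟩
    have : t₁ ≤ s₀ := le_csSup hSbdd ht₁S
    rw [ht₁] at this
    linarith
  obtain ⟨_, γ, hγ0, hγlip, hγU⟩ := hs₀S
  rw [hs₀eq] at hγlip hγU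
  exact ⟨γ, hγ0, hγlip, hγU⟩

theorem Good.surj_est [CompleteSpace X] (h : Good U V) (x : X) (y₁ : Y) :
    ∃ z, U z = y₁ ∧ ‖z - x‖ ≤ ‖y₁ - U x‖ := by
  obtain ⟨γ, h0, hlip, hU⟩ := h.lift x y₁
  refine ⟨γ 1, ?_, ?_⟩
  · rw [hU 1 ⟨zero_le_one, le_refl 1⟩, one_smul, add_sub_cancel]
  · have h1 := hlip 1 ⟨zero_le_one, le_refl 1⟩ 0 ⟨le_refl 0, zero_le_one⟩
    rw [h0] at h1
    simpa using h1

theorem Good.injective [CompleteSpace X] (h : Good U V) : Function.Injective U := by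
  have hpre : PreconnectedSpace X := ⟨(convex_univ (𝕜 := ℝ) (E := X)).isPreconnected⟩
  intro a b hab
  set y₀ := U a with hy₀
  have hlift := fun x : X => h.lift x y₀
  choose Γ hΓ0 hΓlip hΓU using hlift
  have h01 : (0:ℝ) ∈ Icc (0:ℝ) 1 := ⟨le_refl 0, zero_le_one⟩
  have h11 : (1:ℝ) ∈ Icc (0:ℝ) 1 := ⟨zero_le_one, le_refl 1⟩
  have hfix : ∀ x : X, U x = y₀ → Γ x 1 = x := by
    intro x hx
    have huniq := h.uniq (b := 1) (γ₁ := Γ x) (γ₂ := fun _ => x)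
      (contOn_of_lip (hΓlip x)) continuousOn_const
      (fun t ht => by rw [hΓU x t ht, hx]; simp) (hΓ0 x)
    exact huniq 1 h11
  have hloc : ∀ x : X, ∃ ε > 0, ∀ x', dist x' x < ε → Γ x' 1 = Γ x 1 := by
    intro x
    have hγ0 := hΓ0 x
    have hγlip := hΓlip x
    have hγU := hΓU x
    set γ := Γ x with hγdef
    set d := ‖y₀ - U x‖ with hd
    have hd0 : 0 ≤ d := norm_nonneg _
    have hσnorm : ∀ s t : ℝ,
        ‖(U x + s • (y₀ - U x)) - (U x + t • (y₀ - U x))‖ = |s - t| * d := by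
      intro s t
      rw [add_sub_add_left_eq_sub, ← sub_smul, norm_smul, Real.norm_eq_abs]
    have hrad : ∀ t ∈ Icc (0:ℝ) 1, ∃ ρ > 0, ball (γ t) ρ ⊆ V (γ t) ∧
        ball (U x + t • (y₀ - U x)) ρ ⊆ U '' V (γ t) := by
      intro t ht
      obtain ⟨r₁, hr₁, hb₁⟩ := Metric.isOpen_iff.1 (h.1 (γ t)) (γ t) (h.2.1 (γ t))
      have hmem : (U x + t • (y₀ - U x)) ∈ U '' V (γ t) :=
        ⟨γ t, h.2.1 (γ t), hγU t ht⟩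
      obtain ⟨r₂, hr₂, hb₂⟩ := Metric.isOpen_iff.1 (h.2.2.2 (γ t)) _ hmem
      exact ⟨min r₁ r₂, lt_min hr₁ hr₂,
        subset_trans (ball_subset_ball (min_le_left _ _)) hb₁,
        subset_trans (ball_subset_ball (min_le_right _ _)) hb₂⟩
    choose! r hrpos hrV hrim using hrad
    obtain ⟨T, hTmem, hTcov⟩ := isCompact_Icc.elim_nhds_subcover
      (fun t => ball t (r t / (3 * (d + 1))))
      (fun t ht => Metric.ball_mem_nhds t (by have := hrpos t ht; positivity))
    have hTne : T.Nonempty := by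
      by_contra hne
      rw [Finset.not_nonempty_iff_eq_empty] at hne
      have h2 := hTcov h01
      simp [hne] at h2
    set ε := T.inf' hTne (fun i => r i / 3) with hεdef
    have hεpos : 0 < ε := by
      rw [hεdef, Finset.lt_inf'_iff]
      intro i hi
      have := hrpos i (hTmem i hi)
      positivity
    have hεle : ∀ i ∈ T, ε ≤ r i / 3 := fun i hi => Finset.inf'_le _ hi
    refine ⟨ε, hεpos, fun x' hx' => ?_⟩
    have hidx : ∀ t ∈ Icc (0:ℝ) 1, ∃ i ∈ T, t ∈ ball i (r i / (3 * (d + 1))) := by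
      intro t ht
      have h2 := hTcov ht
      simpa using h2
    choose! idx hidxT hidxball using hidx
    have hidxIcc : ∀ t ∈ Icc (0:ℝ) 1, idx t ∈ Icc (0:ℝ) 1 :=
      fun t ht => hTmem _ (hidxT t ht)
    have hidxdist : ∀ t ∈ Icc (0:ℝ) 1, |t - idx t| ≤ r (idx t) / (3 * (d + 1)) := by
      intro t ht
      have h2 := hidxball t ht
      rw [mem_ball, Real.dist_eq] at h2
      exact le_of_lt h2
    have hγnear : ∀ t ∈ Icc (0:ℝ) 1, ‖γ t - γ (idx t)‖ ≤ r (idx t) / 3 := by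
      intro t ht
      have h1 := hγlip t ht (idx t) (hidxIcc t ht)
      have h2 := hidxdist t ht
      have hr := hrpos (idx t) (hidxIcc t ht)
      calc ‖γ t - γ (idx t)‖ ≤ d * |t - idx t| := h1
        _ ≤ d * (r (idx t) / (3 * (d + 1))) := mul_le_mul_of_nonneg_left h2 hd0
        _ ≤ r (idx t) / 3 := by
            rw [← mul_div_assoc, div_le_div_iff₀ (by positivity) (by norm_num)]
            nlinarith
    have hx'n : ‖x' - x‖ < ε := by rwa [dist_eq_norm] at hx'
    have hdistUx : ‖U x' - U x‖ < ε := lt_of_le_of_lt (h.norm_le x x') hx'n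
    have hdr : ∀ ρ : ℝ, 0 < ρ → d * (ρ / (3 * (d + 1))) ≤ ρ / 3 := by
      intro ρ hρ
      rw [← mul_div_assoc, div_le_div_iff₀ (by positivity) (by norm_num)]
      nlinarith
    have hσ'σ' : ∀ t ∈ Icc (0:ℝ) 1,
        ‖(U x' + t • (y₀ - U x')) - (U x + t • (y₀ - U x))‖ < ε := by
      intro t ht
      have e1 : (U x' + t • (y₀ - U x')) - (U x + t • (y₀ - U x))
          = (1 - t) • (U x' - U x) := by module
      rw [e1, norm_smul, Real.norm_eq_abs, abs_of_nonneg (by linarith [ht.2])]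
      have h2 : (1 - t) * ‖U x' - U x‖ ≤ 1 * ‖U x' - U x‖ :=
        mul_le_mul_of_nonneg_right (by linarith [ht.1]) (norm_nonneg _)
      rw [one_mul] at h2
      linarith
    have hmemim : ∀ t ∈ Icc (0:ℝ) 1, ∃ v, v ∈ V (γ (idx t)) ∧
        U v = U x' + t • (y₀ - U x') := by
      intro t ht
      have hin : (U x' + t • (y₀ - U x'))
          ∈ ball (U x + (idx t) • (y₀ - U x)) (r (idx t)) := by
        rw [mem_ball, dist_eq_norm]
        have hsplit : ‖(U x' + t • (y₀ - U x')) - (U x + (idx t) • (y₀ - U x))‖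
            ≤ ‖(U x' + t • (y₀ - U x')) - (U x + t • (y₀ - U x))‖
              + ‖(U x + t • (y₀ - U x)) - (U x + (idx t) • (y₀ - U x))‖ :=
          norm_sub_le_norm_sub_add_norm_sub _ _ _
        have h1 := hσ'σ' t ht
        have h2 : ‖(U x + t • (y₀ - U x)) - (U x + (idx t) • (y₀ - U x))‖
            = |t - idx t| * d := hσnorm t (idx t)
        have h3 := hidxdist t ht
        have h4 : |t - idx t| * d ≤ d * (r (idx t) / (3 * (d + 1))) := by
          rw [mul_comm]
          exact mul_le_mul_of_nonneg_left h3 hd0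
        have hr := hrpos (idx t) (hidxIcc t ht)
        have h5 := hdr (r (idx t)) hr
        have h6 := hεle (idx t) (hidxT t ht)
        linarith
      obtain ⟨v, hv1, hv2⟩ := hrim (idx t) (hidxIcc t ht) hin
      exact ⟨v, hv1, hv2⟩
    choose! γ'' hγ''V hγ''U using hmemim
    have hγtV : ∀ t ∈ Icc (0:ℝ) 1, γ t ∈ V (γ (idx t)) := by
      intro t ht
      apply hrV (idx t) (hidxIcc t ht)
      rw [mem_ball, dist_eq_norm]
      have hr := hrpos (idx t) (hidxIcc t ht)
      exact lt_of_le_of_lt (hγnear t ht) (by linarith)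
    have hkeyeq : ∀ t ∈ Icc (0:ℝ) 1, ‖γ'' t - γ t‖
        = ‖(U x' + t • (y₀ - U x')) - (U x + t • (y₀ - U x))‖ := by
      intro t ht
      have hiso := h.2.2.1 (γ (idx t)) (γ'' t) (hγ''V t ht) (γ t) (hγtV t ht)
      rw [← hiso, hγ''U t ht, hγU t ht]
    have hγ''near : ∀ t ∈ Icc (0:ℝ) 1, ‖γ'' t - γ t‖ < ε := by
      intro t ht
      rw [hkeyeq t ht]
      exact hσ'σ' t ht
    have hend : γ'' 1 = γ 1 := by
      have h1 := hkeyeq 1 h11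
      have h2 : (U x' + (1:ℝ) • (y₀ - U x')) - (U x + (1:ℝ) • (y₀ - U x)) = 0 := by
        rw [one_smul, one_smul]
        abel
      rw [h2, norm_zero] at h1
      exact sub_eq_zero.mp (norm_eq_zero.mp h1)
    have hstart : γ'' 0 = x' := by
      have hx'V : x' ∈ V (γ (idx 0)) := by
        apply hrV (idx 0) (hidxIcc 0 h01)
        rw [mem_ball, dist_eq_norm]
        have hr := hrpos (idx 0) (hidxIcc 0 h01)
        have h6 := hεle (idx 0) (hidxT 0 h01)
        have h1 : ‖x' - γ (idx 0)‖ ≤ ‖x' - x‖ + ‖x - γ (idx 0)‖ :=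
          norm_sub_le_norm_sub_add_norm_sub _ _ _
        have h2 : ‖x - γ (idx 0)‖ ≤ r (idx 0) / 3 := by
          have h3 := hγnear 0 h01
          rwa [hγ0] at h3
        linarith
      apply h.inj (γ (idx 0)) (hγ''V 0 h01) hx'V
      rw [hγ''U 0 h01]
      simp
    have hcont'' : ContinuousOn γ'' (Icc 0 1) := by
      intro t ht
      rw [Metric.continuousWithinAt_iff]
      intro ε' hε'
      have hrt := hrpos (idx t) (hidxIcc t ht)
      have h6 := hεle (idx t) (hidxT t ht)
      refine ⟨min (r (idx t) / (3 * (d + 1))) (ε' / (‖y₀ - U x'‖ + 1)),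
        lt_min (by positivity) (by positivity), fun s hs hds => ?_⟩
      rw [Real.dist_eq] at hds
      have hds1 : |s - t| ≤ r (idx t) / (3 * (d + 1)) :=
        le_of_lt (lt_of_lt_of_le hds (min_le_left _ _))
      have hds2 : |s - t| < ε' / (‖y₀ - U x'‖ + 1) :=
        lt_of_lt_of_le hds (min_le_right _ _)
      have hsV : γ'' s ∈ V (γ (idx t)) := by
        apply hrV (idx t) (hidxIcc t ht)
        rw [mem_ball, dist_eq_norm]
        have a1 := norm_sub_le_norm_sub_add_norm_sub (γ'' s) (γ t) (γ (idx t))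
        have a2 := norm_sub_le_norm_sub_add_norm_sub (γ'' s) (γ s) (γ t)
        have e2 := hγ''near s hs
        have e3 : ‖γ s - γ t‖ ≤ d * |s - t| := hγlip s hs t ht
        have e4 : d * |s - t| ≤ d * (r (idx t) / (3 * (d + 1))) :=
          mul_le_mul_of_nonneg_left hds1 hd0
        have e5 := hdr (r (idx t)) hrt
        have e6 := hγnear t ht
        linarith
      have hiso := h.2.2.1 (γ (idx t)) (γ'' s) hsV (γ'' t) (hγ''V t ht)
      rw [dist_eq_norm, ← hiso, hγ''U s hs, hγ''U t ht]
      have e7 : ‖(U x' + s • (y₀ - U x')) - (U x' + t • (y₀ - U x'))‖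
          = |s - t| * ‖y₀ - U x'‖ := by
        rw [add_sub_add_left_eq_sub, ← sub_smul, norm_smul, Real.norm_eq_abs]
      rw [e7]
      calc |s - t| * ‖y₀ - U x'‖ ≤ |s - t| * (‖y₀ - U x'‖ + 1) := by
            apply mul_le_mul_of_nonneg_left (by linarith [norm_nonneg (y₀ - U x')]) (abs_nonneg _)
        _ < (ε' / (‖y₀ - U x'‖ + 1)) * (‖y₀ - U x'‖ + 1) := by
            apply mul_lt_mul_of_pos_right hds2 (by positivity)
        _ = ε' := by field_simp
    have huniq := h.uniq (b := 1) (γ₁ := Γ x') (γ₂ := γ'')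
      (contOn_of_lip (hΓlip x')) hcont''
      (fun t ht => by rw [hΓU x' t ht, hγ''U t ht])
      (by rw [hΓ0 x', hstart])
    rw [huniq 1 h11, hend]
  have hconst : ∀ x : X, Γ x 1 = Γ a 1 := by
    have hclopen : IsClopen {x : X | Γ x 1 = Γ a 1} := by
      constructor
      · rw [← isOpen_compl_iff, Metric.isOpen_iff]
        intro x hx
        obtain ⟨ε, hε, hloc'⟩ := hloc x
        exact ⟨ε, hε, fun x' hx'' => by
          simp only [mem_compl_iff, mem_setOf_eq] at hx ⊢
          rw [hloc' x' hx'']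
          exact hx⟩
      · rw [Metric.isOpen_iff]
        intro x hx
        obtain ⟨ε, hε, hloc'⟩ := hloc x
        exact ⟨ε, hε, fun x' hx'' => by
          simp only [mem_setOf_eq] at hx ⊢
          rw [hloc' x' hx'']
          exact hx⟩
    rcases isClopen_iff.1 hclopen with hemp | huniv
    · exfalso
      have hmem : a ∈ {x : X | Γ x 1 = Γ a 1} := rfl
      rw [hemp] at hmem
      exact hmem
    · intro x
      have hmem : x ∈ {x : X | Γ x 1 = Γ a 1} := by rw [huniv]; trivial
      exact hmem
  have ha := hfix a rfl
  have hb := hfix b hab.symm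
  rw [← ha, ← hconst b, hb]

end LocalIsometryHomeo

/-- A local isometry between real Banach spaces is a homeomorphism. -/
theorem local_isometry_is_homeomorphism
    {X Y : Type*} [NormedAddCommGroup X] [NormedSpace ℝ X] [CompleteSpace X]
    [NormedAddCommGroup Y] [NormedSpace ℝ Y] [CompleteSpace Y]
    (U : X → Y)
    (hloc : ∀ x : X, ∃ V : Set X, IsOpen V ∧ x ∈ V ∧
      (∀ u ∈ V, ∀ v ∈ V, ‖U u - U v‖ = ‖u - v‖) ∧ IsOpen (U '' V)) :
    Function.Bijective U ∧ Continuous U ∧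
      ∃ Uinv : Y → X, Function.LeftInverse Uinv U ∧ Function.RightInverse Uinv U ∧
        Continuous Uinv := by
  choose V h1 h2 h3 h4 using hloc
  have hG : LocalIsometryHomeo.Good U V := ⟨h1, h2, h3, h4⟩
  have hinj := hG.injective
  have hsurj : Function.Surjective U := fun y => by
    obtain ⟨z, hz, _⟩ := hG.surj_est 0 y
    exact ⟨z, hz⟩
  refine ⟨⟨hinj, hsurj⟩, hG.cont, Function.invFun U, Function.leftInverse_invFun hinj,
    Function.rightInverse_invFun hsurj, ?_⟩
  have hlip : LipschitzWith 1 (Function.invFun U) := by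
    rw [lipschitzWith_iff_dist_le_mul]
    intro y y'
    obtain ⟨z, hz, hle⟩ := hG.surj_est (Function.invFun U y') y
    have hry' : U (Function.invFun U y') = y' := Function.rightInverse_invFun hsurj y'
    have hzeq : z = Function.invFun U y := by
      apply hinj
      rw [hz, Function.rightInverse_invFun hsurj y]
    rw [NNReal.coe_one, one_mul, dist_eq_norm, dist_eq_norm, ← hzeq]
    rw [hry'] at hle
    exact hle
  exact hlip.continuous
end

section
/- Let X and Y be real Banach spaces and let U : X → Y be a local isometry, i.e. every x ∈ X has an open neighborhood V such that U restricted to V is a distance-preserving map onto an open subset of Y. Then U is locally affine: for every x₀ ∈ X there exists ε > 0 such that U((1−t)x₁ + t x₂) = (1−t)U(x₁) + t U(x₂) for all x₁, x₂ in the closed ball B(x₀, ε) and all t ∈ [0,1]. -/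
open Metric Set Function Filter Topology
set_option linter.unusedSectionVars false

section Aux

variable {X : Type*} [NormedAddCommGroup X] [NormedSpace ℝ X]
variable {Y : Type*} [NormedAddCommGroup Y] [NormedSpace ℝ Y]
variable {Z : Type*} [NormedAddCommGroup Z] [NormedSpace ℝ Z]

/-- `f` is an isometry of the open ball `ball c r` onto the open ball `ball (f c) r`. -/
def NiceBall (f : X → Y) (c : X) (r : ℝ) : Prop :=
  (∀ a ∈ ball c r, ∀ b ∈ ball c r, ‖f a - f b‖ = ‖a - b‖) ∧ f '' ball c r = ball (f c) r

lemma NiceBall.restrict {f : X → Y} {c : X} {r : ℝ} (h : NiceBall f c r)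
    {c' : X} {r' : ℝ} (hr' : 0 < r') (hsub : ‖c' - c‖ + r' ≤ r) : NiceBall f c' r' := by
  have hc' : c' ∈ ball c r := by
    rw [mem_ball_iff_norm]; linarith
  have hball : ball c' r' ⊆ ball c r := by
    intro a ha
    rw [mem_ball_iff_norm] at ha ⊢
    calc ‖a - c‖ ≤ ‖a - c'‖ + ‖c' - c‖ := by
          simpa using norm_add_le (a - c') (c' - c)
      _ < r' + ‖c' - c‖ := by linarith
      _ ≤ r := by linarith
  have hiso : ∀ a ∈ ball c' r', ∀ b ∈ ball c' r', ‖f a - f b‖ = ‖a - b‖ :=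
    fun a ha b hb => h.1 a (hball ha) b (hball hb)
  refine ⟨hiso, ?_⟩
  ext y
  constructor
  · rintro ⟨x, hx, rfl⟩
    rw [mem_ball_iff_norm, hiso x hx c' (mem_ball_self hr')]
    exact mem_ball_iff_norm.mp hx
  · intro hy
    have hy' : y ∈ ball (f c) r := by
      rw [mem_ball_iff_norm] at hy ⊢
      have h2 : ‖f c' - f c‖ = ‖c' - c‖ :=
        h.1 c' hc' c (mem_ball_self (by linarith [norm_nonneg (c' - c)]))
      calc ‖y - f c‖ ≤ ‖y - f c'‖ + ‖f c' - f c‖ := by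
            simpa using norm_add_le (y - f c') (f c' - f c)
        _ < r' + ‖c' - c‖ := by rw [h2]; linarith
        _ ≤ r := by linarith
    rw [← h.2] at hy'
    obtain ⟨x, hx, rfl⟩ := hy'
    refine ⟨x, ?_, rfl⟩
    rw [mem_ball_iff_norm, ← h.1 x hx c' hc']
    exact mem_ball_iff_norm.mp hy

lemma NiceBall.inv [Nonempty X] {f : X → Y} {c : X} {r : ℝ} (h : NiceBall f c r) (hr : 0 < r) :
    NiceBall (invFunOn f (ball c r)) (f c) r ∧
      ∀ x ∈ ball c r, invFunOn f (ball c r) (f x) = x := by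
  have hinj : InjOn f (ball c r) := by
    intro a ha b hb hab
    have : ‖a - b‖ = 0 := by rw [← h.1 a ha b hb, hab, sub_self, norm_zero]
    rwa [norm_sub_eq_zero_iff] at this
  have hleft : ∀ x ∈ ball c r, invFunOn f (ball c r) (f x) = x :=
    fun x hx => hinj.leftInvOn_invFunOn hx
  have hmem : ∀ y ∈ ball (f c) r, invFunOn f (ball c r) y ∈ ball c r := by
    intro y hy
    rw [← h.2] at hy
    exact invFunOn_mem hy
  have hright : ∀ y ∈ ball (f c) r, f (invFunOn f (ball c r) y) = y := by
    intro y hy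
    rw [← h.2] at hy
    obtain ⟨x, hx, rfl⟩ := hy
    rw [hleft x hx]
  have hiso : ∀ a ∈ ball (f c) r, ∀ b ∈ ball (f c) r,
      ‖invFunOn f (ball c r) a - invFunOn f (ball c r) b‖ = ‖a - b‖ := by
    intro a ha b hb
    rw [← h.1 _ (hmem a ha) _ (hmem b hb), hright a ha, hright b hb]
  refine ⟨⟨hiso, ?_⟩, hleft⟩
  have hfc : invFunOn f (ball c r) (f c) = c := hleft c (mem_ball_self hr)
  rw [hfc]
  ext x
  constructor
  · rintro ⟨y, hy, rfl⟩
    exact hmem y hy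
  · intro hx
    have hfx : f x ∈ ball (f c) r := by
      rw [mem_ball_iff_norm, h.1 x hx c (mem_ball_self hr)]
      exact mem_ball_iff_norm.mp hx
    exact ⟨f x, hfx, hleft x hx⟩

lemma NiceBall.comp {f : X → Y} {g : Y → Z} {c : X} {r : ℝ}
    (hf : NiceBall f c r) (hg : NiceBall g (f c) r) : NiceBall (g ∘ f) c r := by
  have hmap : ∀ a ∈ ball c r, f a ∈ ball (f c) r := by
    intro a ha
    have hrpos : 0 < r := lt_of_le_of_lt (norm_nonneg _) (mem_ball_iff_norm.mp ha)
    rw [mem_ball_iff_norm, hf.1 a ha c (mem_ball_self hrpos)]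
    exact mem_ball_iff_norm.mp ha
  refine ⟨fun a ha b hb => ?_, ?_⟩
  · simp only [comp_apply]
    rw [hg.1 _ (hmap a ha) _ (hmap b hb), hf.1 a ha b hb]
  · rw [image_comp, hf.2, hg.2]; rfl

lemma niceBall_refl (p c : X) (r : ℝ) : NiceBall (fun z => p - z) c r := by
  refine ⟨fun a _ b _ => ?_, ?_⟩
  · rw [show p - a - (p - b) = -(a - b) by abel, norm_neg]
  · ext y
    simp only [mem_image, mem_ball_iff_norm]
    constructor
    · rintro ⟨x, hx, rfl⟩
      rw [show p - x - (p - c) = -(x - c) by abel, norm_neg]; exact hx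
    · intro hy
      refine ⟨p - y, ?_, by abel⟩
      rw [show p - y - c = -(y - (p - c)) by abel, norm_neg]; exact hy

/-- An isometry of a ball with open image maps the ball onto the ball around the image
of the center. -/
lemma niceBall_of_isOpen [CompleteSpace X] (f : X → Y) (c : X) (r : ℝ) (hr : 0 < r)
    (hiso : ∀ a ∈ ball c r, ∀ b ∈ ball c r, ‖f a - f b‖ = ‖a - b‖)
    (hopen : IsOpen (f '' ball c r)) : NiceBall f c r := by
  refine ⟨hiso, ?_⟩
  apply Subset.antisymm
  · rintro y ⟨x, hx, rfl⟩
    rw [mem_ball_iff_norm, hiso x hx c (mem_ball_self hr)]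
    exact mem_ball_iff_norm.mp hx
  intro y hy
  rcases eq_or_ne y (f c) with rfl | hyne
  · exact ⟨c, mem_ball_self hr, rfl⟩
  set η : ℝ := ‖y - f c‖ with hηdef
  have hη : 0 < η := by
    rw [hηdef]; simpa [sub_eq_zero] using hyne
  have hηr : η < r := mem_ball_iff_norm.mp hy
  set p : ℝ → Y := fun t => f c + t • (y - f c) with hp
  set A : Set ℝ := {t | t ∈ Icc (0:ℝ) 1 ∧ p t ∈ f '' ball c r} with hA
  have h0A : (0:ℝ) ∈ A := by
    refine ⟨⟨le_refl 0, zero_le_one⟩, c, mem_ball_self hr, ?_⟩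
    simp [hp]
  have hAne : A.Nonempty := ⟨0, h0A⟩
  have hAbdd : BddAbove A := ⟨1, fun t htA => htA.1.2⟩
  set T : ℝ := sSup A with hT
  have hT0 : 0 ≤ T := le_csSup hAbdd h0A
  have hT1 : T ≤ 1 := csSup_le hAne fun t htA => htA.1.2
  -- T ∈ A
  obtain ⟨u, humono, hulim, huA⟩ := exists_seq_tendsto_sSup hAne hAbdd
  rw [← hT] at hulim
  choose xs hxs hfxs using fun n => (huA n).2
  have hdistxs : ∀ a b : ℕ, dist (xs a) (xs b) = dist (u a) (u b) * η := by
    intro a b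
    rw [dist_eq_norm, ← hiso _ (hxs a) _ (hxs b), hfxs a, hfxs b]
    simp only [hp]
    rw [show f c + u a • (y - f c) - (f c + u b • (y - f c)) = (u a - u b) • (y - f c) by
      module]
    rw [norm_smul, Real.norm_eq_abs, ← Real.dist_eq, hηdef]
  have hcs : CauchySeq xs := by
    rw [Metric.cauchySeq_iff]
    intro ε hε
    have hu' : CauchySeq u := hulim.cauchySeq
    rw [Metric.cauchySeq_iff] at hu'
    obtain ⟨N, hN⟩ := hu' (ε / (η + 1)) (by positivity)
    refine ⟨N, fun a ha b hb => ?_⟩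
    have h1 := hN a ha b hb
    rw [hdistxs a b]
    calc dist (u a) (u b) * η ≤ dist (u a) (u b) * (η + 1) := by
          have := dist_nonneg (x := u a) (y := u b); nlinarith
      _ < ε / (η + 1) * (η + 1) := by
          have : (0:ℝ) < η + 1 := by linarith
          exact mul_lt_mul_of_pos_right h1 this
      _ = ε := by field_simp
  obtain ⟨x, hxlim⟩ := cauchySeq_tendsto_of_complete hcs
  have hxnorm : ∀ n, ‖xs n - c‖ = u n * η := by
    intro n
    rw [← hiso _ (hxs n) c (mem_ball_self hr), hfxs n]
    simp only [hp]
    rw [show f c + u n • (y - f c) - f c = u n • (y - f c) by module]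
    rw [norm_smul, Real.norm_eq_abs, abs_of_nonneg (huA n).1.1, hηdef]
  have hxball : x ∈ ball c r := by
    have h1 : Tendsto (fun n => ‖xs n - c‖) atTop (𝓝 ‖x - c‖) :=
      ((hxlim.sub tendsto_const_nhds).norm)
    have h2 : Tendsto (fun n => u n * η) atTop (𝓝 (T * η)) :=
      hulim.mul tendsto_const_nhds
    have h3 : ‖x - c‖ = T * η := by
      refine tendsto_nhds_unique ?_ h2
      simpa [hxnorm] using h1
    rw [mem_ball_iff_norm, h3]
    calc T * η ≤ 1 * η := mul_le_mul_of_nonneg_right hT1 hη.le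
      _ = η := one_mul η
      _ < r := hηr
  have hfx : f x = p T := by
    have h1 : Tendsto (fun n => f (xs n)) atTop (𝓝 (f x)) := by
      rw [tendsto_iff_dist_tendsto_zero]
      have heq : ∀ n, dist (f (xs n)) (f x) = dist (xs n) x := by
        intro n
        rw [dist_eq_norm, dist_eq_norm, hiso _ (hxs n) _ hxball]
      simp only [heq]
      exact tendsto_iff_dist_tendsto_zero.mp hxlim
    have h2 : Tendsto (fun n => p (u n)) atTop (𝓝 (p T)) := by
      have hpc : Continuous p := by
        simp only [hp]; fun_prop
      exact (hpc.tendsto T).comp hulim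
    refine tendsto_nhds_unique ?_ h2
    simpa [hfxs] using h1
  have hTA : T ∈ A := ⟨⟨hT0, hT1⟩, x, hxball, hfx⟩
  -- T = 1
  rcases eq_or_lt_of_le hT1 with hT1' | hT1'
  · have : p 1 ∈ f '' ball c r := by rw [← hT1']; exact hTA.2
    simpa [hp] using this
  · exfalso
    obtain ⟨δ, hδ, hδsub⟩ := Metric.isOpen_iff.mp hopen (p T) hTA.2
    set t' : ℝ := min 1 (T + δ / (2 * η)) with ht'
    have ht'T : T < t' := by
      apply lt_min hT1'
      have : 0 < δ / (2 * η) := by positivity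
      linarith
    have ht'A : t' ∈ A := by
      refine ⟨⟨le_min zero_le_one (by positivity), min_le_left _ _⟩, ?_⟩
      apply hδsub
      rw [mem_ball, dist_eq_norm]
      have heq : p t' - p T = (t' - T) • (y - f c) := by simp only [hp]; module
      rw [heq, norm_smul, Real.norm_eq_abs, abs_of_nonneg (by linarith), ← hηdef]
      have h1 : t' - T ≤ δ / (2 * η) := by
        have := min_le_right 1 (T + δ / (2 * η))
        rw [ht'] at *
        linarith [min_le_right 1 (T + δ / (2 * η))]
      calc (t' - T) * η ≤ δ / (2 * η) * η := mul_le_mul_of_nonneg_right h1 hη.le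
        _ = δ / 2 := by field_simp
        _ < δ := by linarith
    have := le_csSup hAbdd ht'A
    rw [← hT] at this
    linarith

/-- images of open subsets of the isometry domain are open. -/
lemma isOpen_image_subball (U : X → Y) (V : Set X) (hVopen : IsOpen (U '' V))
    (hisoV : ∀ u ∈ V, ∀ v ∈ V, ‖U u - U v‖ = ‖u - v‖)
    (s : Set X) (hs : IsOpen s) (hsV : s ⊆ V) : IsOpen (U '' s) := by
  rcases isEmpty_or_nonempty X with hX | hX
  · have : s = ∅ := eq_empty_of_isEmpty s
    simp [this]
  set invU := invFunOn U V with hinvU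
  have hinj : InjOn U V := by
    intro a ha b hb hab
    have : ‖a - b‖ = 0 := by rw [← hisoV a ha b hb, hab, sub_self, norm_zero]
    rwa [norm_sub_eq_zero_iff] at this
  have hleft : ∀ x ∈ V, invU (U x) = x := fun x hx => hinj.leftInvOn_invFunOn hx
  have himg : U '' s = U '' V ∩ invU ⁻¹' s := by
    ext y
    constructor
    · rintro ⟨x, hx, rfl⟩
      exact ⟨⟨x, hsV hx, rfl⟩, by rw [mem_preimage, hleft x (hsV hx)]; exact hx⟩
    · rintro ⟨⟨x, hx, rfl⟩, hpre⟩
      rw [mem_preimage, hleft x hx] at hpre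
      exact ⟨x, hpre, rfl⟩
  rw [himg]
  have hcont : ContinuousOn invU (U '' V) := by
    apply LipschitzOnWith.continuousOn (K := 1)
    intro a ha b hb
    rw [edist_nndist, edist_nndist]
    norm_cast
    rw [one_mul, ← NNReal.coe_le_coe, coe_nndist, coe_nndist, dist_eq_norm, dist_eq_norm]
    obtain ⟨xa, hxa, rfl⟩ := ha
    obtain ⟨xb, hxb, rfl⟩ := hb
    rw [hleft xa hxa, hleft xb hxb, hisoV xa hxa xb hxb]
  exact hcont.isOpen_inter_preimage hVopen hs

/-- the doubling step. -/
lemma step_lemma [Nonempty X] {g : X → X} {u v m : X} (huv : u + v = m + m)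
    {s : ℝ} (hg : NiceBall g m s) (hgu : g u = u) (hgv : g v = v)
    (hs' : 0 < s - 2 * ‖g m - m‖) (hum : ‖u - m‖ < s - 2 * ‖g m - m‖)
    (hvm : ‖v - m‖ < s - 2 * ‖g m - m‖) :
    ∃ g' : X → X, NiceBall g' m (s - 2 * ‖g m - m‖) ∧ g' u = u ∧ g' v = v ∧
      ‖g' m - m‖ = 2 * ‖g m - m‖ := by
  have hdn0 : (0:ℝ) ≤ ‖g m - m‖ := norm_nonneg _
  have hspos : 0 < s := by linarith
  have hs'le : s - 2 * ‖g m - m‖ ≤ s := by linarith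
  obtain ⟨hginvNice, hleft⟩ := hg.inv hspos
  set ginv := invFunOn g (ball m s) with hginvdef
  have hwnorm : ‖(u + v - g m) - g m‖ = 2 * ‖g m - m‖ := by
    have : (u + v - g m) - g m = (2:ℝ) • (m - g m) := by rw [huv]; module
    rw [this, norm_smul, norm_sub_rev]
    norm_num
  have h1 : NiceBall g m (s - 2 * ‖g m - m‖) :=
    hg.restrict hs' (by simp only [sub_self, norm_zero, zero_add]; exact hs'le)
  have h12 : NiceBall ((fun z => (u + v) - z) ∘ g) m (s - 2 * ‖g m - m‖) :=
    h1.comp (niceBall_refl _ _ _)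
  have h3 : NiceBall ginv ((u + v) - g m) (s - 2 * ‖g m - m‖) := by
    apply hginvNice.restrict hs'
    rw [show (u + v) - g m - g m = (u + v - g m) - g m by abel, hwnorm]
    linarith
  have h123 : NiceBall (ginv ∘ ((fun z => (u + v) - z) ∘ g)) m (s - 2 * ‖g m - m‖) :=
    h12.comp h3
  have hfinal : NiceBall ((fun z => (u + v) - z) ∘ (ginv ∘ ((fun z => (u + v) - z) ∘ g)))
      m (s - 2 * ‖g m - m‖) := h123.comp (niceBall_refl _ _ _)
  refine ⟨_, hfinal, ?_, ?_, ?_⟩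
  · -- fixed point u
    simp only [comp_apply, hgu]
    rw [show u + v - u = v by abel, show ginv v = v from by
      nth_rewrite 1 [← hgv]
      exact hleft v (by rw [mem_ball_iff_norm]; linarith)]
    abel
  · -- fixed point v
    simp only [comp_apply, hgv]
    rw [show u + v - v = u by abel, show ginv u = u from by
      nth_rewrite 1 [← hgu]
      exact hleft u (by rw [mem_ball_iff_norm]; linarith)]
    abel
  · -- displacement doubles
    simp only [comp_apply]
    have e1 : u + v - ginv (u + v - g m) - m = m - ginv (u + v - g m) := by
      rw [show u + v - ginv (u + v - g m) - m
          = (u + v) - (m + m) + (m - ginv (u + v - g m)) by abel, huv]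
      abel
    rw [e1]
    have e2 : m = ginv (g m) := (hleft m (mem_ball_self hspos)).symm
    nth_rewrite 1 [e2]
    rw [hginvNice.1 (g m) (mem_ball_self hspos) (u + v - g m)
      (by rw [mem_ball_iff_norm, hwnorm]; linarith)]
    have e3 : g m - (u + v - g m) = (2:ℝ) • (g m - m) := by rw [huv]; module
    rw [e3, norm_smul]
    norm_num

/-- A ball isometry preserves midpoints of points in the small central ball. -/
lemma midpoint_preserved (f : X → Y) (x₀ : X) (r : ℝ) (hr : 0 < r) (hf : NiceBall f x₀ r)
    (u v : X) (hu : u ∈ closedBall x₀ (r / 13)) (hv : v ∈ closedBall x₀ (r / 13)) :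
    f ((2⁻¹ : ℝ) • (u + v)) = (2⁻¹ : ℝ) • (f u + f v) := by
  haveI : Nonempty X := ⟨x₀⟩
  have hεpos : 0 < r / 13 := by positivity
  have hεr : r / 13 < r := by linarith
  have hu' : ‖u - x₀‖ ≤ r / 13 := mem_closedBall_iff_norm.mp hu
  have hv' : ‖v - x₀‖ ≤ r / 13 := mem_closedBall_iff_norm.mp hv
  rcases eq_or_ne u v with rfl | huvne
  · have h1 : (2⁻¹ : ℝ) • (u + u) = u := by module
    have h2 : (2⁻¹ : ℝ) • (f u + f u) = f u := by module
    rw [h1, h2]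
  set m := (2⁻¹ : ℝ) • (u + v) with hm
  have huv : u + v = m + m := by rw [hm]; module
  set D := ‖u - v‖ with hD
  have hDpos : 0 < D := by
    rw [hD]; simpa [sub_eq_zero] using huvne
  have hDε : D ≤ 2 * (r / 13) := by
    rw [hD, show u - v = (u - x₀) - (v - x₀) by abel]
    calc ‖(u - x₀) - (v - x₀)‖ ≤ ‖u - x₀‖ + ‖v - x₀‖ := norm_sub_le _ _
      _ ≤ 2 * (r / 13) := by linarith
  have hum : ‖u - m‖ = D / 2 := by
    rw [show u - m = (2⁻¹ : ℝ) • (u - v) from by rw [hm]; module, norm_smul,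
      Real.norm_eq_abs, ← hD]
    rw [abs_of_nonneg (by norm_num)]
    ring
  have hvm : ‖v - m‖ = D / 2 := by
    rw [show v - m = (2⁻¹ : ℝ) • (v - u) from by rw [hm]; module, norm_smul,
      Real.norm_eq_abs, norm_sub_rev, ← hD]
    rw [abs_of_nonneg (by norm_num)]
    ring
  have hmx₀ : ‖m - x₀‖ ≤ r / 13 := by
    rw [show m - x₀ = (2⁻¹ : ℝ) • ((u - x₀) + (v - x₀)) from by rw [hm]; module, norm_smul,
      Real.norm_eq_abs, abs_of_nonneg (by norm_num : (0:ℝ) ≤ 2⁻¹)]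
    calc 2⁻¹ * ‖(u - x₀) + (v - x₀)‖ ≤ 2⁻¹ * (‖u - x₀‖ + ‖v - x₀‖) := by
          have := norm_add_le (u - x₀) (v - x₀)
          linarith
      _ ≤ r / 13 := by linarith
  have hub : u ∈ ball x₀ r := by rw [mem_ball_iff_norm]; linarith
  have hvb : v ∈ ball x₀ r := by rw [mem_ball_iff_norm]; linarith
  have hmb : m ∈ ball x₀ r := by rw [mem_ball_iff_norm]; linarith
  set d := ‖f m - (2⁻¹ : ℝ) • (f u + f v)‖ with hd
  suffices hdz : d = 0 by
    rw [hd, norm_sub_eq_zero_iff] at hdz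
    exact hdz
  by_contra hdne
  have hdpos : 0 < d := lt_of_le_of_ne (norm_nonneg _) (Ne.symm hdne)
  have hfmu : ‖f m - f u‖ = ‖m - u‖ := hf.1 _ hmb _ hub
  have hfmv : ‖f m - f v‖ = ‖m - v‖ := hf.1 _ hmb _ hvb
  have hdD : 2 * d ≤ D := by
    have he : f m - (2⁻¹ : ℝ) • (f u + f v)
        = (2⁻¹ : ℝ) • (f m - f u) + (2⁻¹ : ℝ) • (f m - f v) := by module
    have hb : d ≤ 2⁻¹ * ‖f m - f u‖ + 2⁻¹ * ‖f m - f v‖ := by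
      rw [hd, he]
      calc ‖(2⁻¹ : ℝ) • (f m - f u) + (2⁻¹ : ℝ) • (f m - f v)‖
          ≤ ‖(2⁻¹ : ℝ) • (f m - f u)‖ + ‖(2⁻¹ : ℝ) • (f m - f v)‖ := norm_add_le _ _
        _ = 2⁻¹ * ‖f m - f u‖ + 2⁻¹ * ‖f m - f v‖ := by
            rw [norm_smul, norm_smul, Real.norm_eq_abs, abs_of_nonneg (by norm_num : (0:ℝ) ≤ 2⁻¹)]
    rw [hfmu, hfmv, norm_sub_rev m u, norm_sub_rev m v, hum, hvm] at hb
    linarith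
  obtain ⟨hfinvNice, hfleft⟩ := hf.inv hr
  set finv := invFunOn f (ball x₀ r) with hfinvdef
  have hfub : f u ∈ ball (f x₀) r := by
    rw [mem_ball_iff_norm, hf.1 u hub x₀ (mem_ball_self hr)]; linarith
  have hfmb : f m ∈ ball (f x₀) r := by
    rw [mem_ball_iff_norm, hf.1 m hmb x₀ (mem_ball_self hr)]; linarith
  have hwb : ∀ s : ℝ, ‖(f u + f v - f m) - f x₀‖ ≤ 2 * (r / 13) := by
    intro _
    rw [show (f u + f v - f m) - f x₀ = (f u - f x₀) + (f v - f m) by abel]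
    calc ‖(f u - f x₀) + (f v - f m)‖ ≤ ‖f u - f x₀‖ + ‖f v - f m‖ := norm_add_le _ _
      _ = ‖u - x₀‖ + ‖v - m‖ := by
          rw [hf.1 u hub x₀ (mem_ball_self hr), hf.1 v hvb m hmb]
      _ ≤ 2 * (r / 13) := by rw [hvm]; linarith
  have hτfmb : (f u + f v - f m) ∈ ball (f x₀) r := by
    rw [mem_ball_iff_norm]
    calc ‖(f u + f v - f m) - f x₀‖ ≤ 2 * (r / 13) := hwb 0
      _ < r := by linarith
  -- the key induction
  have key : ∀ n : ℕ, (∃ g : X → X,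
      NiceBall g m (5 * D - 4 * d * (2 ^ n - 1)) ∧ g u = u ∧ g v = v ∧
        ‖g m - m‖ = 2 ^ (n + 1) * d) ∧ 2 ^ (n + 1) * d ≤ D := by
    intro n
    induction n with
    | zero =>
      constructor
      · -- base construction g₀ = σ ∘ finv ∘ τ ∘ f
        have h5D : (0:ℝ) < 5 * D := by linarith
        have h1 : NiceBall f m (5 * D) := by
          apply hf.restrict h5D
          linarith
        have h12 : NiceBall ((fun w => (f u + f v) - w) ∘ f) m (5 * D) :=
          h1.comp (niceBall_refl _ _ _)
        have h3 : NiceBall finv ((f u + f v) - f m) (5 * D) := by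
          apply hfinvNice.restrict h5D
          have := hwb 0
          rw [show f u + f v - f m - f x₀ = (f u + f v - f m) - f x₀ by abel]
          linarith
        have h123 : NiceBall (finv ∘ ((fun w => (f u + f v) - w) ∘ f)) m (5 * D) :=
          h12.comp h3
        have hbase : NiceBall
            ((fun z => (u + v) - z) ∘ (finv ∘ ((fun w => (f u + f v) - w) ∘ f)))
            m (5 * D) := h123.comp (niceBall_refl _ _ _)
        refine ⟨_, by simpa using hbase, ?_, ?_, ?_⟩
        · simp only [comp_apply]
          rw [show f u + f v - f u = f v by abel, hfleft v hvb]
          abel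
        · simp only [comp_apply]
          rw [show f u + f v - f v = f u by abel, hfleft u hub]
          abel
        · simp only [comp_apply]
          have e1 : u + v - finv (f u + f v - f m) - m = m - finv (f u + f v - f m) := by
            rw [show u + v - finv (f u + f v - f m) - m
                = (u + v) - (m + m) + (m - finv (f u + f v - f m)) by abel, huv]
            abel
          rw [e1]
          nth_rewrite 1 [show m = finv (f m) from (hfleft m hmb).symm]
          rw [hfinvNice.1 (f m) hfmb (f u + f v - f m) hτfmb]
          rw [show f m - (f u + f v - f m)
              = (2:ℝ) • (f m - (2⁻¹ : ℝ) • (f u + f v)) by module]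
          rw [norm_smul, ← hd]
          norm_num
      · -- 2^1 * d ≤ D
        norm_num
        linarith
    | succ n ih =>
      obtain ⟨⟨g, hgN, hgu, hgv, hgm⟩, hbd⟩ := ih
      have hpow : (0:ℝ) < 2 ^ n := by positivity
      have hps : (2:ℝ) ^ (n + 1) = 2 * 2 ^ n := by rw [pow_succ]; ring
      have hps2 : (2:ℝ) ^ (n + 2) = 4 * 2 ^ n := by rw [pow_succ, pow_succ]; ring
      have h2nd : d * 2 ^ n ≤ D / 2 := by
        rw [hps] at hbd; linarith
      have e : 5 * D - 4 * d * ((2:ℝ) ^ n - 1) - 2 * (2 * 2 ^ n * d)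
          = 5 * D - 8 * (d * 2 ^ n) + 4 * d := by ring
      have hs' : 0 < 5 * D - 4 * d * (2 ^ n - 1) - 2 * ‖g m - m‖ := by
        rw [hgm, hps, e]; linarith
      have humlt : ‖u - m‖ < 5 * D - 4 * d * (2 ^ n - 1) - 2 * ‖g m - m‖ := by
        rw [hum, hgm, hps, e]; linarith
      have hvmlt : ‖v - m‖ < 5 * D - 4 * d * (2 ^ n - 1) - 2 * ‖g m - m‖ := by
        rw [hvm, hgm, hps, e]; linarith
      obtain ⟨g', hg'N, hg'u, hg'v, hg'm⟩ := step_lemma huv hgN hgu hgv hs' humlt hvmlt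
      have hrad : 5 * D - 4 * d * (2 ^ n - 1) - 2 * ‖g m - m‖
          = 5 * D - 4 * d * (2 ^ (n + 1) - 1) := by
        rw [hgm, hps]; ring
      have hg'm2 : ‖g' m - m‖ = 2 ^ (n + 1 + 1) * d := by
        rw [hg'm, hgm, pow_succ]; ring
      rw [hrad] at hg'N
      refine ⟨⟨g', hg'N, hg'u, hg'v, hg'm2⟩, ?_⟩
      -- new bound: ‖g' m - m‖ ≤ D
      have e2 : 5 * D - 4 * d * ((2:ℝ) ^ (n + 1) - 1) = 5 * D - 8 * (d * 2 ^ n) + 4 * d := by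
        rw [hps]; ring
      have hradpos : 0 < 5 * D - 4 * d * (2 ^ (n + 1) - 1) := by rw [e2]; linarith
      have humlt' : ‖u - m‖ < 5 * D - 4 * d * (2 ^ (n + 1) - 1) := by
        rw [hum, e2]; linarith
      have hmmem : m ∈ ball m (5 * D - 4 * d * (2 ^ (n + 1) - 1)) := mem_ball_self hradpos
      have humem : u ∈ ball m (5 * D - 4 * d * (2 ^ (n + 1) - 1)) := by
        rw [mem_ball_iff_norm]; exact humlt'
      have htri : ‖g' m - m‖ ≤ ‖g' m - g' u‖ + ‖u - m‖ := by
        rw [hg'u]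
        calc ‖g' m - m‖ = ‖(g' m - u) + (u - m)‖ := by rw [show g' m - u + (u - m) = g' m - m by abel]
          _ ≤ ‖g' m - u‖ + ‖u - m‖ := norm_add_le _ _
      rw [hg'N.1 m hmmem u humem, norm_sub_rev m u, hum, hg'm2] at htri
      linarith
  -- contradiction
  obtain ⟨n, hn⟩ := pow_unbounded_of_one_lt (D / d) (one_lt_two (α := ℝ))
  have hbd := (key n).2
  rw [div_lt_iff₀ hdpos] at hn
  have hps : (2:ℝ) ^ (n + 1) = 2 * 2 ^ n := by rw [pow_succ]; ring
  have hpow : (0:ℝ) < 2 ^ n := by positivity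
  have hprod : 0 < 2 ^ n * d := mul_pos hpow hdpos
  rw [hps] at hbd
  linarith

/-- continuous + midpoint affine on `[0,1]` implies affine on `[0,1]`. -/
lemma midpoint_on_Icc_affine (F : ℝ → Y) (hc : ContinuousOn F (Icc 0 1))
    (hmid : ∀ s ∈ Icc (0:ℝ) 1, ∀ t ∈ Icc (0:ℝ) 1, F ((s + t) / 2) = (2⁻¹ : ℝ) • (F s + F t)) :
    ∀ t ∈ Icc (0:ℝ) 1, F t = (1 - t) • F 0 + t • F 1 := by
  set G : ℝ → Y := fun t => F t - ((1 - t) • F 0 + t • F 1) with hG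
  have hGmid : ∀ s ∈ Icc (0:ℝ) 1, ∀ t ∈ Icc (0:ℝ) 1,
      G ((s + t) / 2) = (2⁻¹ : ℝ) • (G s + G t) := by
    intro s hs t ht
    simp only [hG]
    rw [hmid s hs t ht]
    match_scalars <;> ring
  have hG0 : G 0 = 0 := by simp [hG]
  have hG1 : G 1 = 0 := by simp [hG]
  have hdy : ∀ n : ℕ, ∀ k : ℕ, k ≤ 2 ^ n → G ((k : ℝ) / 2 ^ n) = 0 := by
    intro n
    induction n with
    | zero =>
      intro k hk
      interval_cases k
      · simpa using hG0
      · simpa using hG1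
    | succ n ih =>
      intro k hk
      have hpow : (0:ℝ) < 2 ^ n := by positivity
      have hmemd : ∀ j : ℕ, j ≤ 2 ^ n → ((j : ℝ) / 2 ^ n) ∈ Icc (0:ℝ) 1 := by
        intro j hj
        constructor
        · positivity
        · rw [div_le_one hpow]
          exact_mod_cast hj
      rcases Nat.even_or_odd k with ⟨j, hj⟩ | ⟨j, hj⟩
      · have hj' : j ≤ 2 ^ n := by
          have : 2 ^ (n + 1) = 2 * 2 ^ n := by rw [pow_succ]; ring
          omega
        have he : (k : ℝ) / 2 ^ (n + 1) = (j : ℝ) / 2 ^ n := by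
          subst hj
          push_cast
          rw [pow_succ]
          field_simp
          ring
        rw [he]
        exact ih j hj'
      · have hj' : j + 1 ≤ 2 ^ n := by
          have : 2 ^ (n + 1) = 2 * 2 ^ n := by rw [pow_succ]; ring
          omega
        have hj'' : j ≤ 2 ^ n := by omega
        have he : (k : ℝ) / 2 ^ (n + 1) = ((j : ℝ) / 2 ^ n + ((j : ℝ) + 1) / 2 ^ n) / 2 := by
          subst hj
          push_cast
          rw [pow_succ]
          field_simp
          ring
        rw [he]
        have h2 := hGmid _ (hmemd j hj'') _ (by exact_mod_cast hmemd (j + 1) hj')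
        push_cast at h2
        rw [h2, ih j hj'', (by exact_mod_cast ih (j + 1) hj' : G (((j:ℝ) + 1) / 2 ^ n) = 0)]
        simp
  intro t ht
  set a : ℕ → ℝ := fun n => (⌊t * 2 ^ n⌋₊ : ℝ) / 2 ^ n with ha
  have hale : ∀ n, a n ≤ t := by
    intro n
    have hpow : (0:ℝ) < 2 ^ n := by positivity
    rw [ha]
    rw [div_le_iff₀ hpow]
    exact Nat.floor_le (mul_nonneg ht.1 (by positivity))
  have halb : ∀ n, t - (2⁻¹ : ℝ) ^ n ≤ a n := by
    intro n
    have hpow : (0:ℝ) < 2 ^ n := by positivity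
    have := Nat.lt_floor_add_one (t * 2 ^ n)
    rw [ha]
    rw [sub_le_iff_le_add, div_add' _ _ _ (ne_of_gt hpow)]
    rw [le_div_iff₀ hpow]
    have he : (2⁻¹:ℝ) ^ n * 2 ^ n = 1 := by
      rw [← mul_pow]
      norm_num
    nlinarith
  have hmema : ∀ n, a n ∈ Icc (0:ℝ) 1 := by
    intro n
    exact ⟨by rw [ha]; positivity, le_trans (hale n) ht.2⟩
  have hka : ∀ n, ⌊t * 2 ^ n⌋₊ ≤ 2 ^ n := by
    intro n
    have h1 : t * 2 ^ n ≤ ((2 ^ n : ℕ) : ℝ) := by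
      push_cast
      nlinarith [ht.2, (by positivity : (0:ℝ) < 2 ^ n)]
    calc ⌊t * 2 ^ n⌋₊ ≤ ⌊((2 ^ n : ℕ) : ℝ)⌋₊ := Nat.floor_le_floor h1
      _ = 2 ^ n := Nat.floor_natCast _
  have hzero : ∀ n, G (a n) = 0 := fun n => hdy n _ (hka n)
  have halim : Tendsto a atTop (𝓝 t) := by
    have h1 : Tendsto (fun n : ℕ => t - (2⁻¹ : ℝ) ^ n) atTop (𝓝 (t - 0)) :=
      tendsto_const_nhds.sub
        (tendsto_pow_atTop_nhds_zero_of_lt_one (by norm_num) (by norm_num))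
    rw [sub_zero] at h1
    exact tendsto_of_tendsto_of_tendsto_of_le_of_le h1 tendsto_const_nhds halb hale
  have hGc : ContinuousOn G (Icc 0 1) := by
    apply hc.sub
    apply Continuous.continuousOn
    fun_prop
  have hGt : Tendsto (fun n => G (a n)) atTop (𝓝 (G t)) := by
    apply (hGc t ht).tendsto.comp
    rw [tendsto_nhdsWithin_iff]
    exact ⟨halim, Eventually.of_forall hmema⟩
  have hGt0 : G t = 0 := by
    refine tendsto_nhds_unique hGt ?_
    simpa [hzero] using (tendsto_const_nhds : Tendsto (fun _ : ℕ => (0:Y)) atTop (𝓝 0))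
  have := sub_eq_zero.mp (by simpa [hG] using hGt0)
  exact this

end Aux

/-- A local isometry between real Banach spaces is locally affine. -/
theorem local_isometry_is_locally_affine
    {X Y : Type*} [NormedAddCommGroup X] [NormedSpace ℝ X] [CompleteSpace X]
    [NormedAddCommGroup Y] [NormedSpace ℝ Y] [CompleteSpace Y]
    (U : X → Y)
    (hloc : ∀ x : X, ∃ V : Set X, IsOpen V ∧ x ∈ V ∧
      (∀ u ∈ V, ∀ v ∈ V, ‖U u - U v‖ = ‖u - v‖) ∧ IsOpen (U '' V)) :
    ∀ x₀ : X, ∃ ε > (0 : ℝ),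
      ∀ x₁ ∈ Metric.closedBall x₀ ε, ∀ x₂ ∈ Metric.closedBall x₀ ε,
        ∀ t ∈ Set.Icc (0 : ℝ) 1,
          U ((1 - t) • x₁ + t • x₂) = (1 - t) • U x₁ + t • U x₂ := by
  intro x₀
  obtain ⟨V, hVopen, hx₀V, hVid, hVimg⟩ := hloc x₀
  obtain ⟨r, hrpos, hball⟩ := Metric.isOpen_iff.mp hVopen x₀ hx₀V
  have hiso : ∀ a ∈ ball x₀ r, ∀ b ∈ ball x₀ r, ‖U a - U b‖ = ‖a - b‖ :=
    fun a ha b hb => hVid a (hball ha) b (hball hb)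
  have hopen : IsOpen (U '' ball x₀ r) :=
    isOpen_image_subball U V hVimg hVid _ isOpen_ball hball
  have hf : NiceBall U x₀ r := niceBall_of_isOpen U x₀ r hrpos hiso hopen
  refine ⟨r / 13, by positivity, ?_⟩
  intro x₁ h₁ x₂ h₂ t ht
  set P : ℝ → X := fun t => (1 - t) • x₁ + t • x₂ with hP
  have hPmem : ∀ s ∈ Icc (0:ℝ) 1, P s ∈ closedBall x₀ (r / 13) := by
    intro s hs
    have h1 : P s - x₀ = (1 - s) • (x₁ - x₀) + s • (x₂ - x₀) := by
      simp only [hP]; module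
    rw [mem_closedBall, dist_eq_norm, h1]
    calc ‖(1 - s) • (x₁ - x₀) + s • (x₂ - x₀)‖
        ≤ ‖(1 - s) • (x₁ - x₀)‖ + ‖s • (x₂ - x₀)‖ := norm_add_le _ _
      _ ≤ (1 - s) * (r / 13) + s * (r / 13) := by
          rw [norm_smul, norm_smul, Real.norm_eq_abs, Real.norm_eq_abs,
            abs_of_nonneg (by linarith [hs.2]), abs_of_nonneg hs.1]
          have h₁' := mem_closedBall_iff_norm.mp h₁
          have h₂' := mem_closedBall_iff_norm.mp h₂
          have hs1 : (0:ℝ) ≤ 1 - s := by linarith [hs.2]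
          have := mul_le_mul_of_nonneg_left h₁' hs1
          have := mul_le_mul_of_nonneg_left h₂' hs.1
          linarith
      _ = r / 13 := by ring
  set F : ℝ → Y := fun s => U (P s) with hF
  have hFmid : ∀ s ∈ Icc (0:ℝ) 1, ∀ t' ∈ Icc (0:ℝ) 1,
      F ((s + t') / 2) = (2⁻¹ : ℝ) • (F s + F t') := by
    intro s hs t' ht'
    have hkey : P ((s + t') / 2) = (2⁻¹ : ℝ) • (P s + P t') := by
      simp only [hP]; match_scalars <;> ring
    simp only [hF, hkey]
    exact midpoint_preserved U x₀ r hrpos hf (P s) (P t') (hPmem s hs) (hPmem t' ht')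
  have hUc : ContinuousOn U (closedBall x₀ (r / 13)) := by
    have hsub : closedBall x₀ (r / 13) ⊆ ball x₀ r := by
      apply closedBall_subset_ball; linarith
    have : LipschitzOnWith 1 U (ball x₀ r) := by
      intro a ha b hb
      simp only [edist_nndist]
      rw [← ENNReal.coe_mul]
      norm_cast
      simp only [one_mul, ← NNReal.coe_le_coe, coe_nndist, dist_eq_norm]
      rw [hiso a ha b hb]
    exact (this.continuousOn).mono hsub
  have hPc : Continuous P := by
    simp only [hP]; fun_prop
  have hFc : ContinuousOn F (Icc 0 1) := hUc.comp hPc.continuousOn hPmem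
  have := midpoint_on_Icc_affine F hFc hFmid t ht
  have hF0 : F 0 = U x₁ := by simp [hF, hP]
  have hF1 : F 1 = U x₂ := by simp [hF, hP]
  rw [hF0, hF1] at this
  exact this
end

section
/- Let X and Y be real Banach spaces and let U : X → Y be a bijection which is locally isometric, i.e. every x ∈ X has an open neighborhood V such that U restricted to V is isometric. If U⁻¹ is continuous, then U is a local isometry: every x ∈ X has an open neighborhood V such that U restricted to V is a distance-preserving map onto an open subset of Y (indeed, for every x there exists δ > 0 with U(B(x, δ)) = B(U(x), δ)). -/
/-- A locally isometric bijection between real Banach spaces with continuous inverse is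
a local isometry; indeed, around every point `U` maps some closed ball onto the closed
ball of the same radius around the image point. -/
theorem locally_isometric_bijection_continuous_inverse_is_local_isometry
    {X Y : Type*} [NormedAddCommGroup X] [NormedSpace ℝ X] [CompleteSpace X]
    [NormedAddCommGroup Y] [NormedSpace ℝ Y] [CompleteSpace Y]
    (U : X → Y) (Uinv : Y → X)
    (hleft : Function.LeftInverse Uinv U) (hright : Function.RightInverse Uinv U)
    (hloc : ∀ x : X, ∃ V : Set X, IsOpen V ∧ x ∈ V ∧
      ∀ u ∈ V, ∀ v ∈ V, ‖U u - U v‖ = ‖u - v‖)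
    (hcont : Continuous Uinv) :
    (∀ x : X, ∃ V : Set X, IsOpen V ∧ x ∈ V ∧
      (∀ u ∈ V, ∀ v ∈ V, ‖U u - U v‖ = ‖u - v‖) ∧ IsOpen (U '' V)) ∧
    (∀ x : X, ∃ δ > (0 : ℝ),
      U '' Metric.closedBall x δ = Metric.closedBall (U x) δ) := by
  have key : ∀ x : X, ∃ δ > (0 : ℝ),
      (∀ u ∈ Metric.ball x δ, ∀ v ∈ Metric.ball x δ, ‖U u - U v‖ = ‖u - v‖) ∧
      U '' Metric.ball x δ = Metric.ball (U x) δ ∧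
      U '' Metric.closedBall x δ = Metric.closedBall (U x) δ := by
    intro x
    obtain ⟨V, hVopen, hxV, hiso⟩ := hloc x
    obtain ⟨r, hr, hball⟩ := Metric.isOpen_iff.1 hVopen x hxV
    have hcx : ContinuousAt Uinv (U x) := hcont.continuousAt
    rw [Metric.continuousAt_iff] at hcx
    obtain ⟨ε, hε, hεr⟩ := hcx r hr
    set δ := min ε r / 2 with hδdef
    have hδ : 0 < δ := by positivity
    have hδr : δ < r := by
      have : min ε r ≤ r := min_le_right _ _
      linarith
    have hδε : δ < ε := by
      have : min ε r ≤ ε := min_le_left _ _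
      linarith
    have hdistU : ∀ u ∈ V, ∀ v ∈ V, dist (U u) (U v) = dist u v := by
      intro u hu v hv
      rw [dist_eq_norm, dist_eq_norm]
      exact hiso u hu v hv
    have hsubV : Metric.closedBall x δ ⊆ V := fun u hu =>
      hball (lt_of_le_of_lt (Metric.mem_closedBall.1 hu) hδr)
    have hkey : ∀ y : Y, dist y (U x) ≤ δ →
        Uinv y ∈ V ∧ dist (Uinv y) x = dist y (U x) := by
      intro y hy
      have h1 : dist y (U x) < ε := lt_of_le_of_lt hy hδε
      have h2 := hεr h1
      rw [hleft x] at h2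
      have hV2 : Uinv y ∈ V := hball h2
      refine ⟨hV2, ?_⟩
      have := hdistU (Uinv y) hV2 x hxV
      rw [hright y] at this
      exact this.symm
    refine ⟨δ, hδ, ?_, ?_, ?_⟩
    · intro u hu v hv
      exact hiso u (hsubV (Metric.ball_subset_closedBall hu)) v
        (hsubV (Metric.ball_subset_closedBall hv))
    · ext y
      constructor
      · rintro ⟨u, hu, rfl⟩
        have huV : u ∈ V := hsubV (Metric.ball_subset_closedBall hu)
        rw [Metric.mem_ball, hdistU u huV x hxV]
        exact hu
      · intro hy
        have hy' : dist y (U x) ≤ δ := le_of_lt (Metric.mem_ball.1 hy)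
        obtain ⟨_, hd⟩ := hkey y hy'
        exact ⟨Uinv y, by rw [Metric.mem_ball, hd]; exact hy, hright y⟩
    · ext y
      constructor
      · rintro ⟨u, hu, rfl⟩
        have huV : u ∈ V := hsubV hu
        rw [Metric.mem_closedBall, hdistU u huV x hxV]
        exact hu
      · intro hy
        obtain ⟨_, hd⟩ := hkey y (Metric.mem_closedBall.1 hy)
        exact ⟨Uinv y, by rw [Metric.mem_closedBall, hd]; exact hy, hright y⟩
  constructor
  · intro x
    obtain ⟨δ, hδ, hiso, hopen, _⟩ := key x
    exact ⟨Metric.ball x δ, Metric.isOpen_ball, Metric.mem_ball_self hδ, hiso,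
      hopen ▸ Metric.isOpen_ball⟩
  · intro x
    obtain ⟨δ, hδ, _, _, hcb⟩ := key x
    exact ⟨δ, hδ, hcb⟩
end
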